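/- arXiv:2003.08992 — 4 statements merged into one kernel-verified Lean document; each statement's English description precedes it below -/
import Mathlib

section
/- For every index 1 ≤ i ≤ g+n and all finite-dimensional left H-modules I, J, the reflection equation R_{IJ} X(i)_{I,1} R'_{IJ} X(i)_{J,2} = X(i)_{J,2} R_{IJ} X(i)_{I,1} R'_{IJ} holds in L_{g,n}(H) ⊗ End_k(I) ⊗ End_k(J). -/
open TensorProduct

noncomputable section

set_option maxHeartbeats 1000000
set_option synthInstance.maxHeartbeats 1000000
set_option linter.unusedSectionVars false

namespace CombQuant

/-- A quasitriangular structure on the Hopf algebra `H`: an invertible element `R ∈ H ⊗ H`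
satisfying `(Δ ⊗ id)(R) = R₁₃R₂₃`, `(id ⊗ Δ)(R) = R₁₃R₁₂` and `R Δ(x) = τ(Δ(x)) R` for all
`x ∈ H`; we moreover require the antipode to be bijective. -/
structure QuasiTriangular (k H : Type) [Field k] [Ring H] [HopfAlgebra k H] : Type where
  R : (H ⊗[k] H)ˣ
  comul_left :
    ((Algebra.TensorProduct.assoc k k k H H H).toAlgHom.comp
      (Algebra.TensorProduct.map (Bialgebra.comulAlgHom k H) (AlgHom.id k H))) R.val
    = (Algebra.TensorProduct.map (AlgHom.id k H)
          (Algebra.TensorProduct.includeRight : H →ₐ[k] H ⊗[k] H)) R.val *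
      (Algebra.TensorProduct.includeRight : (H ⊗[k] H) →ₐ[k] H ⊗[k] (H ⊗[k] H)) R.val
  comul_right :
    (Algebra.TensorProduct.map (AlgHom.id k H) (Bialgebra.comulAlgHom k H)) R.val
    = (Algebra.TensorProduct.map (AlgHom.id k H)
          (Algebra.TensorProduct.includeRight : H →ₐ[k] H ⊗[k] H)) R.val *
      (Algebra.TensorProduct.map (AlgHom.id k H)
          (Algebra.TensorProduct.includeLeft : H →ₐ[k] H ⊗[k] H)) R.val
  intertwine : ∀ x : H,
    R.val * Bialgebra.comulAlgHom k H x
      = (Algebra.TensorProduct.comm k H H) (Bialgebra.comulAlgHom k H x) * R.val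
  antipode_bijective : Function.Bijective (HopfAlgebra.antipode (R := k) (A := H))

/-- A finite-dimensional left `H`-module: a finite-dimensional `k`-vector space together with
the representation map `ρ_I : H →ₐ End_k(I)`. -/
structure FDRep (k H : Type) [Field k] [Ring H] [Algebra k H] : Type 1 where
  carrier : Type
  [isAddCommGroup : AddCommGroup carrier]
  [isModule : Module k carrier]
  [isFD : FiniteDimensional k carrier]
  rep : H →ₐ[k] Module.End k carrier

attribute [instance] FDRep.isAddCommGroup FDRep.isModule FDRep.isFD

variable {k H : Type} [Field k] [Ring H] [HopfAlgebra k H] [FiniteDimensional k H]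

/-- The tensor product of two finite-dimensional `H`-modules: `h` acts through the
comultiplication. -/
def FDRep.tensor (I J : FDRep k H) : FDRep k H where
  carrier := I.carrier ⊗[k] J.carrier
  rep := (Module.endTensorEndAlgHom (R := k) (S := k) (A := k)
            (M := I.carrier) (N := J.carrier)).comp
           ((Algebra.TensorProduct.map I.rep J.rep).comp (Bialgebra.comulAlgHom k H))

/-- Index type for the matrix generators of `L_{g,n}(H)`: `b_i`, `a_i` (`1 ≤ i ≤ g`) and
`m_j` (`g+1 ≤ j ≤ g+n`). -/
abbrev GenIdx (g n : ℕ) := (Fin g ⊕ Fin g) ⊕ Fin n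

/-- The site `i ∈ {1, …, g+n}` attached to a generator: `b_i, a_i ↦ i`; `m_j ↦ j`. -/
def GenIdx.site {g n : ℕ} : GenIdx g n → ℕ
  | .inl (.inl i) => i.1 + 1
  | .inl (.inr i) => i.1 + 1
  | .inr j => g + j.1 + 1

/-- `V_{g,n}`: the direct sum of `2g+n` copies of `H*`, indexed by the generators. -/
abbrev Vgn (k H : Type) [Field k] [Ring H] [Algebra k H] (g n : ℕ) :=
  GenIdx g n → Module.Dual k H

/-- The tensor algebra `T(V_{g,n})`. -/
abbrev Tgn (k H : Type) [Field k] [Ring H] [Algebra k H] (g n : ℕ) :=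
  TensorAlgebra k (Vgn k H g n)

/-- The matrix generator attached to the generator index `x` and a linear map
`ρ : H → End_k(W)` (e.g. the representation map of a module), as an element of
`T(V_{g,n}) ⊗ End_k(W)`; it is the image under `ι_x ⊗ id` of the tensor corresponding to `ρ`
via `H* ⊗ End_k(W) ≅ Hom_k(H, End_k(W))`. -/
def genT {g n : ℕ} (x : GenIdx g n) {W : Type} [AddCommGroup W] [Module k W]
    (ρ : H →ₗ[k] Module.End k W) : Tgn k H g n ⊗[k] Module.End k W :=
  TensorProduct.map
    ((TensorAlgebra.ι k).comp (LinearMap.single k (fun _ : GenIdx g n => Module.Dual k H) x))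
    LinearMap.id
    ((dualTensorHomEquiv k H (Module.End k W)).symm ρ)

/-- The canonical algebra embedding `End_k(I) → End_k(I ⊗ J)`, `e ↦ e ⊗ id`
(first leg of `End_k(I) ⊗ End_k(J) ≅ End_k(I ⊗ J)`). -/
def embEnd1 (I J : FDRep k H) :
    Module.End k I.carrier →ₐ[k] Module.End k (I.carrier ⊗[k] J.carrier) :=
  (Module.endTensorEndAlgHom (R := k) (S := k) (A := k)
    (M := I.carrier) (N := J.carrier)).comp Algebra.TensorProduct.includeLeft

/-- The canonical algebra embedding `End_k(J) → End_k(I ⊗ J)`, `e ↦ id ⊗ e`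
(second leg of `End_k(I) ⊗ End_k(J) ≅ End_k(I ⊗ J)`). -/
def embEnd2 (I J : FDRep k H) :
    Module.End k J.carrier →ₐ[k] Module.End k (I.carrier ⊗[k] J.carrier) :=
  (Module.endTensorEndAlgHom (R := k) (S := k) (A := k)
    (M := I.carrier) (N := J.carrier)).comp Algebra.TensorProduct.includeRight

/-- `R_{IJ} = (ρ_I ⊗ ρ_J)(R)` as a unit of `End_k(I ⊗ J) ≅ End_k(I) ⊗ End_k(J)`. -/
def Rmat (qt : QuasiTriangular k H) (I J : FDRep k H) :
    (Module.End k (I.carrier ⊗[k] J.carrier))ˣ :=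
  Units.map ((Module.endTensorEndAlgHom (R := k) (S := k) (A := k)
      (M := I.carrier) (N := J.carrier)).comp
    (Algebra.TensorProduct.map I.rep J.rep)).toRingHom.toMonoidHom qt.R

/-- `R'_{IJ} = (ρ_I ⊗ ρ_J)(R')` (with `R' = τ(R)`) as a unit of
`End_k(I ⊗ J) ≅ End_k(I) ⊗ End_k(J)`. -/
def Rmat' (qt : QuasiTriangular k H) (I J : FDRep k H) :
    (Module.End k (I.carrier ⊗[k] J.carrier))ˣ :=
  Units.map ((Module.endTensorEndAlgHom (R := k) (S := k) (A := k)
      (M := I.carrier) (N := J.carrier)).comp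
    ((Algebra.TensorProduct.map I.rep J.rep).comp
      (Algebra.TensorProduct.comm k H H).toAlgHom)).toRingHom.toMonoidHom qt.R

/-- `X(x)_{I,1}`: the generator matrix on `I`, embedded in
`T(V_{g,n}) ⊗ End(I ⊗ J) ≅ T(V_{g,n}) ⊗ End I ⊗ End J`. -/
def genT1 {g n : ℕ} (x : GenIdx g n) (I J : FDRep k H) :
    Tgn k H g n ⊗[k] Module.End k (I.carrier ⊗[k] J.carrier) :=
  (Algebra.TensorProduct.map (AlgHom.id k (Tgn k H g n)) (embEnd1 I J))
    (genT x I.rep.toLinearMap)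

/-- `X(x)_{J,2}`: the generator matrix on `J`, embedded in
`T(V_{g,n}) ⊗ End(I ⊗ J) ≅ T(V_{g,n}) ⊗ End I ⊗ End J`. -/
def genT2 {g n : ℕ} (x : GenIdx g n) (I J : FDRep k H) :
    Tgn k H g n ⊗[k] Module.End k (I.carrier ⊗[k] J.carrier) :=
  (Algebra.TensorProduct.map (AlgHom.id k (Tgn k H g n)) (embEnd2 I J))
    (genT x J.rep.toLinearMap)

/-- `R_{IJ}` as a unit of `T(V_{g,n}) ⊗ End(I ⊗ J)`. -/
def RmatT (g n : ℕ) (qt : QuasiTriangular k H) (I J : FDRep k H) :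
    (Tgn k H g n ⊗[k] Module.End k (I.carrier ⊗[k] J.carrier))ˣ :=
  Units.map (Algebra.TensorProduct.includeRight (R := k) (A := Tgn k H g n)
    ).toRingHom.toMonoidHom (Rmat qt I J)

/-- `R'_{IJ}` as a unit of `T(V_{g,n}) ⊗ End(I ⊗ J)`. -/
def RmatT' (g n : ℕ) (qt : QuasiTriangular k H) (I J : FDRep k H) :
    (Tgn k H g n ⊗[k] Module.End k (I.carrier ⊗[k] J.carrier))ˣ :=
  Units.map (Algebra.TensorProduct.includeRight (R := k) (A := Tgn k H g n)
    ).toRingHom.toMonoidHom (Rmat' qt I J)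

/-- The fusion relator `X(x)_{I⊗J} − X(x)_{I,1} R'_{IJ} X(x)_{J,2} R'_{IJ}⁻¹`
in `T(V_{g,n}) ⊗ End(I ⊗ J)`. -/
def fusionRel {g n : ℕ} (qt : QuasiTriangular k H) (I J : FDRep k H) (x : GenIdx g n) :
    Tgn k H g n ⊗[k] Module.End k (I.carrier ⊗[k] J.carrier) :=
  (genT x (W := I.carrier ⊗[k] J.carrier) (I.tensor J).rep.toLinearMap :
    Tgn k H g n ⊗[k] Module.End k (I.carrier ⊗[k] J.carrier))
  - genT1 x I J * (RmatT' g n qt I J).val * genT2 x I J * ((RmatT' g n qt I J)⁻¹).val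

/-- The `B(i)`–`A(i)` exchange relator
`R_{IJ} B(i)₁ R'_{IJ} A(i)₂ − A(i)₂ R_{IJ} B(i)₁ R_{IJ}⁻¹` in `T(V_{g,n}) ⊗ End(I ⊗ J)`. -/
def exchangeBARel {g n : ℕ} (qt : QuasiTriangular k H) (I J : FDRep k H) (i : Fin g) :
    Tgn k H g n ⊗[k] Module.End k (I.carrier ⊗[k] J.carrier) :=
  (RmatT g n qt I J).val * genT1 (Sum.inl (Sum.inl i) : GenIdx g n) I J *
      (RmatT' g n qt I J).val * genT2 (Sum.inl (Sum.inr i) : GenIdx g n) I J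
  - genT2 (Sum.inl (Sum.inr i) : GenIdx g n) I J * (RmatT g n qt I J).val *
      genT1 (Sum.inl (Sum.inl i) : GenIdx g n) I J * ((RmatT g n qt I J)⁻¹).val

/-- The exchange relator for generators at distinct sites:
`R_{IJ} X(i)₁ R_{IJ}⁻¹ Y(j)₂ − Y(j)₂ R_{IJ} X(i)₁ R_{IJ}⁻¹` in `T(V_{g,n}) ⊗ End(I ⊗ J)`. -/
def exchangeRel {g n : ℕ} (qt : QuasiTriangular k H) (I J : FDRep k H) (x y : GenIdx g n) :
    Tgn k H g n ⊗[k] Module.End k (I.carrier ⊗[k] J.carrier) :=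
  (RmatT g n qt I J).val * genT1 x I J * ((RmatT g n qt I J)⁻¹).val * genT2 y I J
  - genT2 y I J * (RmatT g n qt I J).val * genT1 x I J * ((RmatT g n qt I J)⁻¹).val

/-- The "entry extraction" map `(id ⊗ λ) : T ⊗ W → T` for a linear form `λ` on `W`. -/
def cntr {T : Type} [AddCommGroup T] [Module k T] {W : Type} [AddCommGroup W] [Module k W]
    (lam : Module.Dual k W) (t : T ⊗[k] W) : T :=
  TensorProduct.rid k T (TensorProduct.map LinearMap.id lam t)

/-- The set of entries of all defining relators of `L_{g,n}(H)`. -/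
def relSet (g n : ℕ) (qt : QuasiTriangular k H) : Set (Tgn k H g n) :=
  { t | (∃ (I J : FDRep k H) (x : GenIdx g n)
            (lam : Module.Dual k (Module.End k (I.carrier ⊗[k] J.carrier))),
          t = cntr lam (fusionRel qt I J x)) ∨
        (∃ (I J : FDRep k H) (i : Fin g)
            (lam : Module.Dual k (Module.End k (I.carrier ⊗[k] J.carrier))),
          t = cntr lam (exchangeBARel qt I J i)) ∨
        (∃ (I J : FDRep k H) (x y : GenIdx g n), x.site < y.site ∧
          ∃ lam : Module.Dual k (Module.End k (I.carrier ⊗[k] J.carrier)),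
          t = cntr lam (exchangeRel qt I J x y)) }

/-- The relation generating (as a two-sided ideal) the defining ideal of `L_{g,n}(H)`. -/
def lgnRel (g n : ℕ) (qt : QuasiTriangular k H) : Tgn k H g n → Tgn k H g n → Prop :=
  fun t s => t ∈ relSet g n qt ∧ s = 0

/-- The algebra `L_{g,n}(H)`: the quotient of `T(V_{g,n})` by the two-sided ideal generated
by the entries of the defining relators. -/
def Lgn (g n : ℕ) (qt : QuasiTriangular k H) : Type := RingQuot (lgnRel g n qt)

instance (g n : ℕ) (qt : QuasiTriangular k H) : Ring (Lgn g n qt) :=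
  inferInstanceAs (Ring (RingQuot (lgnRel g n qt)))

instance (g n : ℕ) (qt : QuasiTriangular k H) : Algebra k (Lgn g n qt) :=
  inferInstanceAs (Algebra k (RingQuot (lgnRel g n qt)))

/-- The canonical projection `T(V_{g,n}) → L_{g,n}(H)`. -/
def lgnProj (g n : ℕ) (qt : QuasiTriangular k H) : Tgn k H g n →ₐ[k] Lgn g n qt :=
  RingQuot.mkAlgHom k (lgnRel g n qt)

/-- The matrix generator `X(x)` attached to `ρ : H → End_k(W)`, as an element of
`L_{g,n}(H) ⊗ End_k(W)`. -/
def genL {g n : ℕ} (qt : QuasiTriangular k H) (x : GenIdx g n) {W : Type} [AddCommGroup W]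
    [Module k W] (ρ : H →ₗ[k] Module.End k W) : Lgn g n qt ⊗[k] Module.End k W :=
  TensorProduct.map (lgnProj g n qt).toLinearMap LinearMap.id (genT x ρ)


/-- `X(x)_{I,1}`: the generator matrix on `I`, embedded in
`L_{g,n}(H) ⊗ End(I ⊗ J) ≅ L_{g,n}(H) ⊗ End I ⊗ End J`. -/
def genL1 {g n : ℕ} (qt : QuasiTriangular k H) (x : GenIdx g n) (I J : FDRep k H) :
    Lgn g n qt ⊗[k] Module.End k (I.carrier ⊗[k] J.carrier) :=
  (Algebra.TensorProduct.map (AlgHom.id k (Lgn g n qt)) (embEnd1 I J))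
    (genL qt x I.rep.toLinearMap)

/-- `X(x)_{J,2}`: the generator matrix on `J`, embedded in
`L_{g,n}(H) ⊗ End(I ⊗ J) ≅ L_{g,n}(H) ⊗ End I ⊗ End J`. -/
def genL2 {g n : ℕ} (qt : QuasiTriangular k H) (x : GenIdx g n) (I J : FDRep k H) :
    Lgn g n qt ⊗[k] Module.End k (I.carrier ⊗[k] J.carrier) :=
  (Algebra.TensorProduct.map (AlgHom.id k (Lgn g n qt)) (embEnd2 I J))
    (genL qt x J.rep.toLinearMap)

/-- `R_{IJ}` as an element of `L_{g,n}(H) ⊗ End(I ⊗ J)`. -/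
def RmatL (g n : ℕ) (qt : QuasiTriangular k H) (I J : FDRep k H) :
    Lgn g n qt ⊗[k] Module.End k (I.carrier ⊗[k] J.carrier) :=
  (Algebra.TensorProduct.includeRight (R := k) (A := Lgn g n qt)) (Rmat qt I J).val

/-- `R'_{IJ}` as an element of `L_{g,n}(H) ⊗ End(I ⊗ J)`. -/
def RmatL' (g n : ℕ) (qt : QuasiTriangular k H) (I J : FDRep k H) :
    Lgn g n qt ⊗[k] Module.End k (I.carrier ⊗[k] J.carrier) :=
  (Algebra.TensorProduct.includeRight (R := k) (A := Lgn g n qt)) (Rmat' qt I J).val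

/-! ### Auxiliary lemmas for the proof of `stmt2` -/

section Aux

variable {T W W' W'' : Type} [AddCommGroup T] [Module k T]
  [AddCommGroup W] [Module k W] [AddCommGroup W'] [Module k W']
  [AddCommGroup W''] [Module k W'']

lemma dth_nat (F : W →ₗ[k] W') (t : Module.Dual k H ⊗[k] W) :
    dualTensorHom k H W' (TensorProduct.map LinearMap.id F t)
      = F ∘ₗ dualTensorHom k H W t := by
  induction t using TensorProduct.induction_on with
  | zero => simp
  | tmul f v => ext m; simp [dualTensorHom_apply]
  | add a b ha hb => simp only [map_add, ha, hb]; ext m; simp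

lemma dth_symm_nat (F : W →ₗ[k] W') (ρ : H →ₗ[k] W) :
    (dualTensorHomEquiv k H W').symm (F ∘ₗ ρ)
      = TensorProduct.map LinearMap.id F ((dualTensorHomEquiv k H W).symm ρ) := by
  apply (dualTensorHomEquiv k H W').injective
  rw [LinearEquiv.apply_symm_apply]
  have h1 : dualTensorHomEquiv k H W'
        (TensorProduct.map LinearMap.id F ((dualTensorHomEquiv k H W).symm ρ))
      = dualTensorHom k H W'
        (TensorProduct.map LinearMap.id F ((dualTensorHomEquiv k H W).symm ρ)) := rfl
  rw [h1, dth_nat]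
  have h2 : dualTensorHom k H W ((dualTensorHomEquiv k H W).symm ρ) = ρ :=
    (dualTensorHomEquiv k H W).apply_symm_apply ρ
  rw [h2]

lemma map_id_comp (F : W' →ₗ[k] W'') (G : W →ₗ[k] W') (t : T ⊗[k] W) :
    TensorProduct.map LinearMap.id F (TensorProduct.map LinearMap.id G t)
      = TensorProduct.map LinearMap.id (F ∘ₗ G) t := by
  rw [← LinearMap.comp_apply, ← TensorProduct.map_comp, LinearMap.id_comp]

lemma map_map_comm {L : Type} [AddCommGroup L] [Module k L]
    (p : T →ₗ[k] L) (F : W →ₗ[k] W') (t : T ⊗[k] W) :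
    TensorProduct.map p LinearMap.id (TensorProduct.map LinearMap.id F t)
      = TensorProduct.map LinearMap.id F (TensorProduct.map p LinearMap.id t) := by
  rw [← LinearMap.comp_apply, ← TensorProduct.map_comp, ← LinearMap.comp_apply,
    ← TensorProduct.map_comp, LinearMap.id_comp, LinearMap.comp_id, LinearMap.id_comp,
    LinearMap.comp_id]

lemma incl_mul_incl {A : Type} [Ring A] [Algebra k A]
    (a c : Module.End k W) (t : A ⊗[k] Module.End k W) :
    (Algebra.TensorProduct.includeRight (R := k) (A := A) a) * t *
        (Algebra.TensorProduct.includeRight (R := k) (A := A) c)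
      = TensorProduct.map LinearMap.id
          ((LinearMap.mulLeft k a) ∘ₗ (LinearMap.mulRight k c)) t := by
  induction t using TensorProduct.induction_on with
  | zero => simp
  | tmul s e =>
      simp only [Algebra.TensorProduct.includeRight_apply, Algebra.TensorProduct.tmul_mul_tmul,
        TensorProduct.map_tmul, LinearMap.id_coe, id_eq, LinearMap.comp_apply,
        LinearMap.mulLeft_apply, LinearMap.mulRight_apply, one_mul, mul_one]
      rw [mul_assoc]
  | add x y hx hy => simp only [mul_add, add_mul, map_add, hx, hy]

lemma cntr_tensor_eq {ι : Type} [Fintype ι] (b : Module.Basis ι k W) (t : T ⊗[k] W) :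
    t = ∑ i, (cntr (b.coord i) t) ⊗ₜ[k] b i := by
  induction t using TensorProduct.induction_on with
  | zero => simp [cntr]
  | tmul s w =>
      simp only [cntr, TensorProduct.map_tmul, LinearMap.id_coe, id_eq, TensorProduct.rid_tmul]
      calc s ⊗ₜ[k] w = s ⊗ₜ[k] (∑ i, b.repr w i • b i) := by rw [Module.Basis.sum_repr]
        _ = ∑ i, (b.coord i w • s) ⊗ₜ[k] b i := by
            rw [TensorProduct.tmul_sum]
            exact Finset.sum_congr rfl fun i _ => by
              rw [TensorProduct.smul_tmul, Module.Basis.coord_apply]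
  | add x y hx hy =>
      have hc : ∀ lam : Module.Dual k W, cntr (T := T) lam (x + y) = cntr lam x + cntr lam y := by
        intro lam; simp [cntr, map_add]
      simp only [hc, TensorProduct.add_tmul, Finset.sum_add_distrib]
      rw [← hx, ← hy]

lemma map_inv_val {A B : Type} [Ring A] [Ring B] [Algebra k A] [Algebra k B]
    (f : A →ₐ[k] B) (u : Aˣ) (v : Bˣ) (h : f u.val = v.val) : f ↑u⁻¹ = ↑v⁻¹ := by
  have hv : Units.map f.toRingHom.toMonoidHom u = v := Units.ext (by simpa using h)
  rw [← hv]
  exact (Units.coe_map_inv (f.toRingHom.toMonoidHom) u).symm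

end Aux

section GenLemmas

lemma genT_comp {g n : ℕ} (x : GenIdx g n) {W W' : Type} [AddCommGroup W] [Module k W]
    [AddCommGroup W'] [Module k W'] (F : Module.End k W →ₗ[k] Module.End k W')
    (ρ : H →ₗ[k] Module.End k W) :
    TensorProduct.map LinearMap.id F (genT (g := g) (n := n) x ρ) = genT x (F ∘ₗ ρ) := by
  unfold genT
  rw [dth_symm_nat]
  exact (map_map_comm _ _ _).symm

lemma genL_comp {g n : ℕ} (qt : QuasiTriangular k H) (x : GenIdx g n) {W W' : Type}
    [AddCommGroup W] [Module k W] [AddCommGroup W'] [Module k W']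
    (F : Module.End k W →ₗ[k] Module.End k W') (ρ : H →ₗ[k] Module.End k W) :
    TensorProduct.map LinearMap.id F (genL (g := g) (n := n) qt x ρ) = genL qt x (F ∘ₗ ρ) := by
  unfold genL
  rw [← map_map_comm, genT_comp]

end GenLemmas

section Sigma

/-- Conjugation by the flip `J ⊗ I ≃ I ⊗ J` as an algebra isomorphism of endomorphism
algebras. -/
def σconj (I J : FDRep k H) :
    Module.End k (J.carrier ⊗[k] I.carrier) ≃ₐ[k] Module.End k (I.carrier ⊗[k] J.carrier) :=
  AlgEquiv.ofLinearEquiv (TensorProduct.comm k J.carrier I.carrier).conj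
    (by rw [Module.End.one_eq_id]
        exact ((TensorProduct.comm k J.carrier I.carrier).conj_id).trans
          Module.End.one_eq_id.symm)
    (fun f g => by
      rw [Module.End.mul_eq_comp, LinearEquiv.conj_comp, Module.End.mul_eq_comp])

lemma σconj_map (I J : FDRep k H) (f : Module.End k I.carrier) (g : Module.End k J.carrier) :
    σconj I J (TensorProduct.AlgebraTensorModule.map g f)
      = TensorProduct.AlgebraTensorModule.map f g := by
  apply TensorProduct.ext'
  intro v w
  simp [σconj, AlgEquiv.ofLinearEquiv_apply, LinearEquiv.conj_apply_apply,
    TensorProduct.comm_tmul, TensorProduct.comm_symm_tmul]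

lemma σconj_ete (I J : FDRep k H) (s : H ⊗[k] H) :
    σconj I J (Module.endTensorEndAlgHom (R := k) (S := k) (A := k)
        ((Algebra.TensorProduct.map J.rep I.rep) s))
      = Module.endTensorEndAlgHom (R := k) (S := k) (A := k)
          ((Algebra.TensorProduct.map I.rep J.rep) ((Algebra.TensorProduct.comm k H H) s)) := by
  induction s using TensorProduct.induction_on with
  | zero => simp
  | tmul h1 h2 =>
      rw [Algebra.TensorProduct.map_tmul, Algebra.TensorProduct.comm_tmul,
        Algebra.TensorProduct.map_tmul, Module.endTensorEndAlgHom_apply,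
        Module.endTensorEndAlgHom_apply]
      exact σconj_map I J (I.rep h2) (J.rep h1)
  | add a b ha hb => simp only [map_add, ha, hb]

lemma comm_comm (s : H ⊗[k] H) :
    (Algebra.TensorProduct.comm k H H) ((Algebra.TensorProduct.comm k H H) s) = s := by
  induction s using TensorProduct.induction_on with
  | zero => simp
  | tmul a b => rw [Algebra.TensorProduct.comm_tmul, Algebra.TensorProduct.comm_tmul]
  | add a b ha hb => simp only [map_add, ha, hb]

end Sigma


section Fusion

variable (g n : ℕ) (qt : QuasiTriangular k H) (I J : FDRep k H)

/-- `R_{IJ}` as a unit of `L_{g,n}(H) ⊗ End(I ⊗ J)`. -/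
def RmatLu : (Lgn g n qt ⊗[k] Module.End k (I.carrier ⊗[k] J.carrier))ˣ :=
  Units.map (Algebra.TensorProduct.includeRight (R := k) (A := Lgn g n qt)
    ).toRingHom.toMonoidHom (Rmat qt I J)

/-- `R'_{IJ}` as a unit of `L_{g,n}(H) ⊗ End(I ⊗ J)`. -/
def RmatLu' : (Lgn g n qt ⊗[k] Module.End k (I.carrier ⊗[k] J.carrier))ˣ :=
  Units.map (Algebra.TensorProduct.includeRight (R := k) (A := Lgn g n qt)
    ).toRingHom.toMonoidHom (Rmat' qt I J)

/-- The canonical algebra map `T(V) ⊗ End(I⊗J) → L ⊗ End(I⊗J)`. -/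
def Fmap : Tgn k H g n ⊗[k] Module.End k (I.carrier ⊗[k] J.carrier) →ₐ[k]
    Lgn g n qt ⊗[k] Module.End k (I.carrier ⊗[k] J.carrier) :=
  Algebra.TensorProduct.map (lgnProj g n qt) (AlgHom.id k _)

variable {g n qt I J}

lemma map_rel_zero {W : Type} [AddCommGroup W] [Module k W] [FiniteDimensional k W]
    (r : Tgn k H g n ⊗[k] W)
    (hr : ∀ lam : Module.Dual k W, lgnRel g n qt (cntr lam r) 0) :
    TensorProduct.map (lgnProj g n qt).toLinearMap LinearMap.id r = 0 := by
  classical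
  set b := Module.finBasis k W with hb
  conv_lhs => rw [cntr_tensor_eq b r]
  rw [map_sum]
  apply Finset.sum_eq_zero
  intro i _
  rw [TensorProduct.map_tmul]
  have h0 : lgnProj g n qt (cntr (b.coord i) r) = 0 := by
    have h1 := RingQuot.mkAlgHom_rel k (hr (b.coord i))
    rw [map_zero] at h1
    exact h1
  have h2 : (lgnProj g n qt).toLinearMap (cntr (b.coord i) r) = 0 := h0
  rw [h2, TensorProduct.zero_tmul]

lemma F_genT {x : GenIdx g n} :
    Fmap g n qt I J (genT x (W := I.carrier ⊗[k] J.carrier) (I.tensor J).rep.toLinearMap)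
      = genL qt x (I.tensor J).rep.toLinearMap := rfl

lemma F_genT1 {x : GenIdx g n} : Fmap g n qt I J (genT1 x I J) = genL1 qt x I J := by
  show TensorProduct.map (lgnProj g n qt).toLinearMap LinearMap.id
      (TensorProduct.map LinearMap.id (embEnd1 I J).toLinearMap (genT x I.rep.toLinearMap))
    = TensorProduct.map LinearMap.id (embEnd1 I J).toLinearMap
        (TensorProduct.map (lgnProj g n qt).toLinearMap LinearMap.id (genT x I.rep.toLinearMap))
  rw [map_map_comm]

lemma F_genT2 {x : GenIdx g n} : Fmap g n qt I J (genT2 x I J) = genL2 qt x I J := by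
  show TensorProduct.map (lgnProj g n qt).toLinearMap LinearMap.id
      (TensorProduct.map LinearMap.id (embEnd2 I J).toLinearMap (genT x J.rep.toLinearMap))
    = TensorProduct.map LinearMap.id (embEnd2 I J).toLinearMap
        (TensorProduct.map (lgnProj g n qt).toLinearMap LinearMap.id (genT x J.rep.toLinearMap))
  rw [map_map_comm]

lemma F_RmatT' : Fmap g n qt I J (RmatT' g n qt I J).val = (RmatLu' g n qt I J).val := by
  show Fmap g n qt I J
      (Algebra.TensorProduct.includeRight (R := k) (A := Tgn k H g n) (Rmat' qt I J).val)
    = Algebra.TensorProduct.includeRight (R := k) (A := Lgn g n qt) (Rmat' qt I J).val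
  simp [Fmap, Algebra.TensorProduct.includeRight_apply, Algebra.TensorProduct.map_tmul]

lemma F_invRmatT' :
    Fmap g n qt I J ((RmatT' g n qt I J)⁻¹).val = ((RmatLu' g n qt I J)⁻¹).val :=
  map_inv_val (Fmap g n qt I J) (RmatT' g n qt I J) (RmatLu' g n qt I J) F_RmatT'

lemma fusionL (x : GenIdx g n) :
    genL qt x (W := I.carrier ⊗[k] J.carrier) (I.tensor J).rep.toLinearMap
      = genL1 qt x I J * (RmatLu' g n qt I J).val * genL2 qt x I J *
          ((RmatLu' g n qt I J)⁻¹).val := by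
  have h0 : Fmap g n qt I J (fusionRel qt I J x) = 0 := by
    have h1 : Fmap g n qt I J (fusionRel qt I J x)
        = TensorProduct.map (lgnProj g n qt).toLinearMap LinearMap.id (fusionRel qt I J x) := rfl
    rw [h1]
    exact map_rel_zero _ (fun lam => ⟨Or.inl ⟨I, J, x, lam, rfl⟩, rfl⟩)
  simp only [fusionRel] at h0
  rw [map_sub, sub_eq_zero, map_mul, map_mul, map_mul] at h0
  rw [F_genT, F_genT1, F_genT2, F_RmatT', F_invRmatT'] at h0
  exact h0

end Fusion

section Conj

variable {g n : ℕ} {qt : QuasiTriangular k H} {I J : FDRep k H}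

lemma rep_tensor_conj (h : H) :
    σconj I J (Module.endTensorEndAlgHom (R := k) (S := k) (A := k)
        ((Algebra.TensorProduct.map J.rep I.rep) (Bialgebra.comulAlgHom k H h)))
      = (Rmat qt I J).val *
          (Module.endTensorEndAlgHom (R := k) (S := k) (A := k)
            ((Algebra.TensorProduct.map I.rep J.rep) (Bialgebra.comulAlgHom k H h))) *
          ((Rmat qt I J)⁻¹).val := by
  rw [σconj_ete I J (Bialgebra.comulAlgHom k H h), Units.eq_mul_inv_iff_mul_eq]
  have h2 := congrArg (fun z => (Module.endTensorEndAlgHom (R := k) (S := k) (A := k)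
      (M := I.carrier) (N := J.carrier)).comp (Algebra.TensorProduct.map I.rep J.rep) z)
    (qt.intertwine h)
  simp only [map_mul] at h2
  exact h2.symm

variable (g n qt I J)

/-- The conjugation map `L ⊗ End(J⊗I) → L ⊗ End(I⊗J)`. -/
def Ψmap : Lgn g n qt ⊗[k] Module.End k (J.carrier ⊗[k] I.carrier) →ₐ[k]
    Lgn g n qt ⊗[k] Module.End k (I.carrier ⊗[k] J.carrier) :=
  Algebra.TensorProduct.map (AlgHom.id k (Lgn g n qt)) (σconj I J).toAlgHom

variable {g n qt I J}

lemma Ψ_genL1 {x : GenIdx g n} : Ψmap g n qt I J (genL1 qt x J I) = genL2 qt x I J := by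
  show TensorProduct.map LinearMap.id (σconj I J).toLinearMap
      (TensorProduct.map LinearMap.id (embEnd1 J I).toLinearMap (genL qt x J.rep.toLinearMap))
    = TensorProduct.map LinearMap.id (embEnd2 I J).toLinearMap (genL qt x J.rep.toLinearMap)
  rw [map_id_comp]
  have hcomp : (σconj I J).toLinearMap ∘ₗ (embEnd1 J I).toLinearMap
      = (embEnd2 I J).toLinearMap := by
    apply LinearMap.ext
    intro e
    show σconj I J (embEnd1 J I e) = embEnd2 I J e
    have h1 : embEnd1 J I e
        = TensorProduct.AlgebraTensorModule.map e (1 : Module.End k I.carrier) := by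
      show Module.endTensorEndAlgHom (R := k) (S := k) (A := k) (e ⊗ₜ[k] 1) = _
      rw [Module.endTensorEndAlgHom_apply]
    have h2 : embEnd2 I J e
        = TensorProduct.AlgebraTensorModule.map (1 : Module.End k I.carrier) e := by
      show Module.endTensorEndAlgHom (R := k) (S := k) (A := k)
          ((1 : Module.End k I.carrier) ⊗ₜ[k] e) = _
      rw [Module.endTensorEndAlgHom_apply]
    rw [h1, h2, σconj_map]
  rw [hcomp]

lemma Ψ_genL2 {x : GenIdx g n} : Ψmap g n qt I J (genL2 qt x J I) = genL1 qt x I J := by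
  show TensorProduct.map LinearMap.id (σconj I J).toLinearMap
      (TensorProduct.map LinearMap.id (embEnd2 J I).toLinearMap (genL qt x I.rep.toLinearMap))
    = TensorProduct.map LinearMap.id (embEnd1 I J).toLinearMap (genL qt x I.rep.toLinearMap)
  rw [map_id_comp]
  have hcomp : (σconj I J).toLinearMap ∘ₗ (embEnd2 J I).toLinearMap
      = (embEnd1 I J).toLinearMap := by
    apply LinearMap.ext
    intro e
    show σconj I J (embEnd2 J I e) = embEnd1 I J e
    have h1 : embEnd2 J I e
        = TensorProduct.AlgebraTensorModule.map (1 : Module.End k J.carrier) e := by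
      show Module.endTensorEndAlgHom (R := k) (S := k) (A := k)
          ((1 : Module.End k J.carrier) ⊗ₜ[k] e) = _
      rw [Module.endTensorEndAlgHom_apply]
    have h2 : embEnd1 I J e
        = TensorProduct.AlgebraTensorModule.map e (1 : Module.End k J.carrier) := by
      show Module.endTensorEndAlgHom (R := k) (S := k) (A := k) (e ⊗ₜ[k] 1) = _
      rw [Module.endTensorEndAlgHom_apply]
    rw [h1, h2, σconj_map]
  rw [hcomp]

lemma σconj_Rmat' : σconj I J (Rmat' qt J I).val = (Rmat qt I J).val := by
  show σconj I J (Module.endTensorEndAlgHom (R := k) (S := k) (A := k)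
      ((Algebra.TensorProduct.map J.rep I.rep)
        ((Algebra.TensorProduct.comm k H H) qt.R.val)))
    = Module.endTensorEndAlgHom (R := k) (S := k) (A := k)
        ((Algebra.TensorProduct.map I.rep J.rep) qt.R.val)
  rw [σconj_ete, comm_comm]

lemma Ψ_RmatLu' : Ψmap g n qt I J (RmatLu' g n qt J I).val = (RmatLu g n qt I J).val := by
  show Ψmap g n qt I J
      (Algebra.TensorProduct.includeRight (R := k) (A := Lgn g n qt) (Rmat' qt J I).val)
    = Algebra.TensorProduct.includeRight (R := k) (A := Lgn g n qt) (Rmat qt I J).val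
  rw [← σconj_Rmat' (qt := qt) (I := I) (J := J)]
  simp [Ψmap, Algebra.TensorProduct.includeRight_apply, Algebra.TensorProduct.map_tmul]

lemma Ψ_invRmatLu' :
    Ψmap g n qt I J ((RmatLu' g n qt J I)⁻¹).val = ((RmatLu g n qt I J)⁻¹).val :=
  map_inv_val (Ψmap g n qt I J) (RmatLu' g n qt J I) (RmatLu g n qt I J) Ψ_RmatLu'

lemma Ψ_genLtensor {x : GenIdx g n} :
    Ψmap g n qt I J (genL qt x (W := J.carrier ⊗[k] I.carrier) (J.tensor I).rep.toLinearMap)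
      = (RmatLu g n qt I J).val *
          (genL qt x (W := I.carrier ⊗[k] J.carrier) (I.tensor J).rep.toLinearMap :
            Lgn g n qt ⊗[k] Module.End k (I.carrier ⊗[k] J.carrier)) *
          ((RmatLu g n qt I J)⁻¹).val := by
  have h1 : Ψmap g n qt I J
        (genL qt x (W := J.carrier ⊗[k] I.carrier) (J.tensor I).rep.toLinearMap)
      = genL qt x ((σconj I J).toLinearMap ∘ₗ (J.tensor I).rep.toLinearMap) := by
    show TensorProduct.map LinearMap.id (σconj I J).toLinearMap
        (genL qt x (J.tensor I).rep.toLinearMap) = _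
    exact genL_comp qt x _ _
  rw [h1]
  have h2 : (σconj I J).toLinearMap ∘ₗ (J.tensor I).rep.toLinearMap
      = ((LinearMap.mulLeft k (Rmat qt I J).val) ∘ₗ
          (LinearMap.mulRight k ((Rmat qt I J)⁻¹).val)) ∘ₗ
            ((I.tensor J).rep.toLinearMap :
              H →ₗ[k] Module.End k (I.carrier ⊗[k] J.carrier)) := by
    apply LinearMap.ext
    intro h
    show σconj I J (Module.endTensorEndAlgHom (R := k) (S := k) (A := k)
        ((Algebra.TensorProduct.map J.rep I.rep) (Bialgebra.comulAlgHom k H h)))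
      = (Rmat qt I J).val * ((Module.endTensorEndAlgHom (R := k) (S := k) (A := k)
          ((Algebra.TensorProduct.map I.rep J.rep) (Bialgebra.comulAlgHom k H h))) *
          ((Rmat qt I J)⁻¹).val)
    rw [← mul_assoc]
    exact rep_tensor_conj h
  rw [h2]
  erw [← genL_comp, ← incl_mul_incl]
  rfl

end Conj


/-- the reflection equation
`R_{IJ} X(i)₁ R'_{IJ} X(i)₂ = X(i)₂ R_{IJ} X(i)₁ R'_{IJ}` holds in
`L_{g,n}(H) ⊗ End_k(I) ⊗ End_k(J)` (identified with `L_{g,n}(H) ⊗ End_k(I ⊗ J)`), for every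
generator `X(i)` (`1 ≤ i ≤ g+n`) and all finite-dimensional left `H`-modules `I`, `J`. -/
theorem stmt2 (g n : ℕ) (qt : QuasiTriangular k H) (I J : FDRep k H) (x : GenIdx g n) :
    RmatL g n qt I J * genL1 qt x I J * RmatL' g n qt I J * genL2 qt x I J
      = genL2 qt x I J * RmatL g n qt I J * genL1 qt x I J * RmatL' g n qt I J := by
  have fus1 := fusionL (qt := qt) (I := I) (J := J) x
  have fus2 := fusionL (qt := qt) (I := J) (J := I) x
  have h2 := congrArg (Ψmap g n qt I J) fus2
  rw [map_mul, map_mul, map_mul] at h2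
  erw [Ψ_genLtensor] at h2
  rw [Ψ_genL1, Ψ_genL2, Ψ_RmatLu',
    Ψ_invRmatLu'] at h2
  have h3 : (RmatLu g n qt I J).val *
        (genL qt x (W := I.carrier ⊗[k] J.carrier) (I.tensor J).rep.toLinearMap :
          Lgn g n qt ⊗[k] Module.End k (I.carrier ⊗[k] J.carrier))
      = genL2 qt x I J * (RmatLu g n qt I J).val * genL1 qt x I J := by
    have h4 := congrArg (fun y => y * (RmatLu g n qt I J).val) h2
    simpa only [Units.inv_mul_cancel_right] using h4
  have hval : RmatL g n qt I J = (RmatLu g n qt I J).val := rfl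
  have hval' : RmatL' g n qt I J = (RmatLu' g n qt I J).val := rfl
  rw [hval, hval']
  have hthis : (RmatLu g n qt I J).val *
        (genL1 qt x I J * (RmatLu' g n qt I J).val * genL2 qt x I J *
          ((RmatLu' g n qt I J)⁻¹).val) * (RmatLu' g n qt I J).val
      = genL2 qt x I J * (RmatLu g n qt I J).val * genL1 qt x I J *
          (RmatLu' g n qt I J).val := by
    rw [← fus1]
    erw [h3]
  have step : (RmatLu g n qt I J).val *
        (genL1 qt x I J * (RmatLu' g n qt I J).val * genL2 qt x I J *
          ((RmatLu' g n qt I J)⁻¹).val) * (RmatLu' g n qt I J).val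
      = (RmatLu g n qt I J).val * genL1 qt x I J * (RmatLu' g n qt I J).val *
          genL2 qt x I J := by
    rw [mul_assoc (RmatLu g n qt I J).val _ (RmatLu' g n qt I J).val,
      Units.inv_mul_cancel_right]
    simp only [mul_assoc]
  rw [← step, hthis]

end CombQuant

end
end

section
/- Let V be a finite-dimensional left H-module such that every finite-dimensional left H-module is isomorphic to a direct summand of V^{⊗N} for some N ≥ 0. Then L_{g,n}(H) is generated as a k-algebra by the entries of the matrices B(i)_V, A(i)_V (1 ≤ i ≤ g) and M(i)_V (g+1 ≤ i ≤ g+n), that is, by the elements (id ⊗ λ)(X(i)_V) for λ ranging over the linear forms on End_k(V) and i ranging over 1, …, g+n. -/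
open TensorProduct

noncomputable section

set_option maxHeartbeats 1000000
set_option synthInstance.maxHeartbeats 1000000

namespace CombQuant

variable {k H : Type} [Field k] [Ring H] [HopfAlgebra k H] [FiniteDimensional k H]

/-- The trivial one-dimensional `H`-module `k`, given by the counit. -/
def FDRep.trivialRep : FDRep k H where
  carrier := k
  rep := (Algebra.lmul k k).comp (Bialgebra.counitAlgHom k H)

/-- Iterated tensor power `V^{⊗N}` of an `H`-module (with `V^{⊗0}` the trivial module). -/
def FDRep.pow (V : FDRep k H) : ℕ → FDRep k H
  | 0 => FDRep.trivialRep
  | (N + 1) => V.tensor (V.pow N)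

section Proofs

variable {g n : ℕ}

lemma cntr_tmul {T : Type} [AddCommGroup T] [Module k T] {W : Type} [AddCommGroup W]
    [Module k W] (lam : Module.Dual k W) (t : T) (w : W) :
    cntr lam (t ⊗ₜ[k] w) = lam w • t := by
  simp [cntr]

lemma cntr_zero {T : Type} [AddCommGroup T] [Module k T] {W : Type} [AddCommGroup W]
    [Module k W] (lam : Module.Dual k W) : cntr lam (0 : T ⊗[k] W) = 0 := by
  simp [cntr]

lemma cntr_add {T : Type} [AddCommGroup T] [Module k T] {W : Type} [AddCommGroup W]
    [Module k W] (lam : Module.Dual k W) (u v : T ⊗[k] W) :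
    cntr lam (u + v) = cntr lam u + cntr lam v := by
  simp [cntr, map_add]

lemma cntr_sub {T : Type} [AddCommGroup T] [Module k T] {W : Type} [AddCommGroup W]
    [Module k W] (lam : Module.Dual k W) (u v : T ⊗[k] W) :
    cntr lam (u - v) = cntr lam u - cntr lam v := by
  simp [cntr, map_sub]

lemma cntr_map {T T' W W' : Type} [AddCommGroup T] [Module k T] [AddCommGroup T'] [Module k T']
    [AddCommGroup W] [Module k W] [AddCommGroup W'] [Module k W']
    (f : T →ₗ[k] T') (gm : W →ₗ[k] W') (lam : Module.Dual k W') (u : T ⊗[k] W) :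
    cntr lam (TensorProduct.map f gm u) = f (cntr (lam ∘ₗ gm) u) := by
  induction u using TensorProduct.induction_on with
  | zero => simp [cntr]
  | tmul t w => simp [cntr_tmul, map_smul]
  | add a b ha hb => rw [map_add, cntr_add, cntr_add, ha, hb, map_add]

/-- The generator entry `ι(single_x φ)` of `T(V_{g,n})`. -/
def eT (x : GenIdx g n) (φ : Module.Dual k H) : Tgn k H g n :=
  TensorAlgebra.ι k ((LinearMap.single k (fun _ : GenIdx g n => Module.Dual k H) x) φ)

lemma cntr_dualTensor {W : Type} [AddCommGroup W] [Module k W]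
    (lam : Module.Dual k (Module.End k W)) (u : Module.Dual k H ⊗[k] Module.End k W) :
    cntr lam u = lam ∘ₗ dualTensorHom k H (Module.End k W) u := by
  induction u using TensorProduct.induction_on with
  | zero => simp [cntr]
  | tmul φ e =>
    apply LinearMap.ext; intro h
    simp [cntr_tmul, dualTensorHom_apply, mul_comm]
  | add a b ha hb =>
    rw [cntr_add, map_add, ha, hb]
    ext h; simp

lemma cntr_genT {W : Type} [AddCommGroup W] [Module k W] (x : GenIdx g n)
    (ρ : H →ₗ[k] Module.End k W) (lam : Module.Dual k (Module.End k W)) :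
    cntr lam (genT (g := g) (n := n) x ρ) = eT x (lam ∘ₗ ρ) := by
  unfold genT
  rw [cntr_map, LinearMap.comp_id, cntr_dualTensor]
  have h1 : dualTensorHom k H (Module.End k W)
      ((dualTensorHomEquiv k H (Module.End k W)).symm ρ) = ρ :=
    (dualTensorHomEquiv k H (Module.End k W)).apply_symm_apply ρ
  rw [h1]
  rfl

lemma cntr_genL (qt : QuasiTriangular k H) (x : GenIdx g n) {W : Type} [AddCommGroup W]
    [Module k W] (ρ : H →ₗ[k] Module.End k W) (lam : Module.Dual k (Module.End k W)) :
    cntr lam (genL qt x ρ) = lgnProj g n qt (eT x (lam ∘ₗ ρ)) := by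
  unfold genL
  rw [cntr_map, LinearMap.comp_id, cntr_genT]
  rfl

lemma cntr_mapLeft {A A' W : Type} [Ring A] [Algebra k A] [Ring A'] [Algebra k A']
    [Ring W] [Algebra k W] (f : A →ₐ[k] A') (lam : Module.Dual k W) (u : A ⊗[k] W) :
    cntr lam (Algebra.TensorProduct.map f (AlgHom.id k W) u) = f (cntr lam u) := by
  induction u using TensorProduct.induction_on with
  | zero => rw [map_zero, cntr_zero, cntr_zero, map_zero]
  | tmul a w => simp [Algebra.TensorProduct.map_tmul, cntr_tmul, map_smul]
  | add a b ha hb => rw [map_add, cntr_add, cntr_add, ha, hb, map_add]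

lemma cntr_mapRight {A W W' : Type} [Ring A] [Algebra k A] [Ring W] [Algebra k W]
    [Ring W'] [Algebra k W'] (gm : W →ₐ[k] W') (lam : Module.Dual k W') (u : A ⊗[k] W) :
    cntr lam (Algebra.TensorProduct.map (AlgHom.id k A) gm u)
      = cntr (lam ∘ₗ gm.toLinearMap) u := by
  induction u using TensorProduct.induction_on with
  | zero => rw [map_zero, cntr_zero, cntr_zero]
  | tmul a w => simp [Algebra.TensorProduct.map_tmul, cntr_tmul]
  | add a b ha hb => rw [map_add, cntr_add, cntr_add, ha, hb]

lemma cntr_mem_of_mem_range {L W : Type} [Ring L] [Algebra k L] [Ring W] [Algebra k W]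
    (B : Subalgebra k L) (u : L ⊗[k] W)
    (hu : u ∈ (Algebra.TensorProduct.map B.val (AlgHom.id k W)).range)
    (lam : Module.Dual k W) : cntr lam u ∈ B := by
  rw [AlgHom.mem_range] at hu
  obtain ⟨w, rfl⟩ := hu
  induction w using TensorProduct.induction_on with
  | zero => rw [map_zero, cntr_zero]; exact B.zero_mem
  | tmul b e =>
    rw [Algebra.TensorProduct.map_tmul, AlgHom.id_apply, cntr_tmul]
    exact B.smul_mem b.2 _
  | add a c ha hc => rw [map_add, cntr_add]; exact B.add_mem ha hc

lemma mem_range_of_forall_cntr {L W : Type} [Ring L] [Algebra k L] [Ring W] [Algebra k W]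
    [FiniteDimensional k W] (B : Subalgebra k L) (u : L ⊗[k] W)
    (h : ∀ lam : Module.Dual k W, cntr lam u ∈ B) :
    u ∈ (Algebra.TensorProduct.map B.val (AlgHom.id k W)).range := by
  classical
  let b := Module.finBasis k W
  have hu : ∀ v : L ⊗[k] W, v = ∑ i, cntr (b.coord i) v ⊗ₜ[k] b i := by
    intro v
    induction v using TensorProduct.induction_on with
    | zero => simp [cntr_zero]
    | tmul t w =>
      calc t ⊗ₜ[k] w = t ⊗ₜ[k] (∑ i, b.repr w i • b i) := by rw [Module.Basis.sum_repr]
        _ = ∑ i, (b.repr w i • t) ⊗ₜ[k] b i := by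
            rw [tmul_sum]
            exact Finset.sum_congr rfl fun i _ => (smul_tmul _ _ _).symm
        _ = ∑ i, cntr (b.coord i) (t ⊗ₜ[k] w) ⊗ₜ[k] b i := by
            simp [cntr_tmul, Module.Basis.coord_apply]
    | add v₁ v₂ h₁ h₂ =>
      conv_lhs => rw [h₁, h₂]
      rw [← Finset.sum_add_distrib]
      exact Finset.sum_congr rfl fun i _ => by rw [cntr_add, add_tmul]
  rw [hu u]
  exact Subalgebra.sum_mem _ fun i _ => (AlgHom.mem_range _).mpr
    ⟨(⟨cntr (b.coord i) u, h _⟩ : B) ⊗ₜ[k] b i, by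
      rw [Algebra.TensorProduct.map_tmul, AlgHom.id_apply]; rfl⟩

/-- `I` is *good* (w.r.t. a subalgebra `B` of `L_{g,n}`) if all entries of the matrices
`X(x)_I` lie in `B`. -/
def good (qt : QuasiTriangular k H) (B : Subalgebra k (Lgn g n qt)) (I : FDRep k H) : Prop :=
  ∀ (x : GenIdx g n) (lam : Module.Dual k (Module.End k I.carrier)),
    lgnProj g n qt (eT x (lam ∘ₗ I.rep.toLinearMap)) ∈ B

lemma good_tensor {qt : QuasiTriangular k H} {B : Subalgebra k (Lgn g n qt)} {I J : FDRep k H}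
    (hI : good qt B I) (hJ : good qt B J) : good qt B (I.tensor J) := by
  intro x lam
  have hrel : lgnProj g n qt (cntr lam (fusionRel qt I J x)) = 0 := by
    have h0 : lgnRel g n qt (cntr lam (fusionRel qt I J x)) 0 :=
      ⟨Or.inl ⟨I, J, x, lam, rfl⟩, rfl⟩
    have h1 := RingQuot.mkAlgHom_rel k h0
    rw [map_zero] at h1
    exact h1
  rw [fusionRel] at hrel
  erw [cntr_sub] at hrel
  rw [map_sub, sub_eq_zero] at hrel
  erw [cntr_genT] at hrel
  rw [hrel]
  rw [show lgnProj g n qt (cntr lam (genT1 x I J * (RmatT' g n qt I J).val * genT2 x I J *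
        ((RmatT' g n qt I J)⁻¹).val))
      = cntr lam ((Algebra.TensorProduct.map (lgnProj g n qt)
          (AlgHom.id k (Module.End k (I.carrier ⊗[k] J.carrier))))
          (genT1 x I J * (RmatT' g n qt I J).val * genT2 x I J *
            ((RmatT' g n qt I J)⁻¹).val)) from (cntr_mapLeft _ lam _).symm]
  refine cntr_mem_of_mem_range B _ ?_ lam
  rw [map_mul, map_mul, map_mul]
  have hone : ∀ r : Module.End k (I.carrier ⊗[k] J.carrier), ((1 : Lgn g n qt) ⊗ₜ[k] r)
      ∈ (Algebra.TensorProduct.map B.val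
          (AlgHom.id k (Module.End k (I.carrier ⊗[k] J.carrier)))).range := fun r =>
    (AlgHom.mem_range _).mpr
      ⟨(1 : B) ⊗ₜ[k] r, by rw [Algebra.TensorProduct.map_tmul, AlgHom.id_apply]; rfl⟩
  have hRT : (Algebra.TensorProduct.map (lgnProj g n qt)
        (AlgHom.id k (Module.End k (I.carrier ⊗[k] J.carrier))))
      ((RmatT' g n qt I J).val) ∈ (Algebra.TensorProduct.map B.val
        (AlgHom.id k (Module.End k (I.carrier ⊗[k] J.carrier)))).range := by
    have hval : ((RmatT' g n qt I J).val)
        = (1 : Tgn k H g n) ⊗ₜ[k] ((Rmat' qt I J).val) := by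
      simp [RmatT']
    rw [hval, Algebra.TensorProduct.map_tmul, map_one, AlgHom.id_apply]
    exact hone _
  have hRTinv : (Algebra.TensorProduct.map (lgnProj g n qt)
        (AlgHom.id k (Module.End k (I.carrier ⊗[k] J.carrier))))
      (((RmatT' g n qt I J)⁻¹).val) ∈ (Algebra.TensorProduct.map B.val
        (AlgHom.id k (Module.End k (I.carrier ⊗[k] J.carrier)))).range := by
    have hval : (((RmatT' g n qt I J)⁻¹).val)
        = (1 : Tgn k H g n) ⊗ₜ[k] (((Rmat' qt I J)⁻¹).val) := by
      simp [RmatT', Units.coe_map_inv]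
    rw [hval, Algebra.TensorProduct.map_tmul, map_one, AlgHom.id_apply]
    exact hone _
  have hg1 : (Algebra.TensorProduct.map (lgnProj g n qt)
        (AlgHom.id k (Module.End k (I.carrier ⊗[k] J.carrier)))) (genT1 x I J)
      ∈ (Algebra.TensorProduct.map B.val
        (AlgHom.id k (Module.End k (I.carrier ⊗[k] J.carrier)))).range := by
    refine mem_range_of_forall_cntr B _ (fun lam' => ?_)
    rw [cntr_mapLeft, genT1, cntr_mapRight, cntr_genT]
    exact hI x _
  have hg2 : (Algebra.TensorProduct.map (lgnProj g n qt)
        (AlgHom.id k (Module.End k (I.carrier ⊗[k] J.carrier)))) (genT2 x I J)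
      ∈ (Algebra.TensorProduct.map B.val
        (AlgHom.id k (Module.End k (I.carrier ⊗[k] J.carrier)))).range := by
    refine mem_range_of_forall_cntr B _ (fun lam' => ?_)
    rw [cntr_mapLeft, genT2, cntr_mapRight, cntr_genT]
    exact hJ x _
  exact mul_mem (mul_mem (mul_mem hg1 hRT) hg2) hRTinv

lemma good_tensor_trivial {qt : QuasiTriangular k H} {B : Subalgebra k (Lgn g n qt)}
    {I : FDRep k H} (hI : good qt B I) : good qt B (I.tensor FDRep.trivialRep) := by
  intro x lam
  have key : lam ∘ₗ (I.tensor (FDRep.trivialRep (k := k) (H := H))).rep.toLinearMap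
      = (lam ∘ₗ (embEnd1 I FDRep.trivialRep).toLinearMap) ∘ₗ I.rep.toLinearMap := by
    apply LinearMap.ext; intro h
    have claim : ∀ u : H ⊗[k] H,
        lam ((Module.endTensorEndAlgHom (R := k) (S := k) (A := k))
          ((Algebra.TensorProduct.map I.rep (FDRep.trivialRep (k := k) (H := H)).rep) u))
        = lam (embEnd1 I FDRep.trivialRep (I.rep ((TensorProduct.rid k H)
            ((LinearMap.lTensor H (Coalgebra.counit (R := k))) u)))) := by
      intro u
      induction u using TensorProduct.induction_on with
      | zero => simp
      | tmul a b =>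
        have htriv : (FDRep.trivialRep (k := k) (H := H)).rep b
            = (Coalgebra.counit (R := k) b) •
              (1 : Module.End k (FDRep.trivialRep (k := k) (H := H)).carrier) := by
          apply LinearMap.ext; intro c
          rfl
        rw [Algebra.TensorProduct.map_tmul, htriv, tmul_smul, map_smul]
        simp [Module.endTensorEndAlgHom_apply, embEnd1, TensorProduct.rid_tmul,
          LinearMap.lTensor_tmul, map_smul, Algebra.TensorProduct.includeLeft_apply]
      | add u v hu hv =>
        simp only [map_add, LinearMap.add_apply]
        exact (LinearMap.map_add lam _ _).trans ((congrArg₂ (· + ·) hu hv).trans (LinearMap.map_add lam _ _).symm)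
    have hrep : (I.tensor (FDRep.trivialRep (k := k) (H := H))).rep h
        = (Module.endTensorEndAlgHom (R := k) (S := k) (A := k))
          ((Algebra.TensorProduct.map I.rep (FDRep.trivialRep (k := k) (H := H)).rep)
            (Bialgebra.comulAlgHom k H h)) := rfl
    show lam ((I.tensor (FDRep.trivialRep (k := k) (H := H))).rep h)
        = lam (embEnd1 I FDRep.trivialRep (I.rep h))
    rw [hrep]
    refine Eq.trans (claim _) ?_
    rw [Bialgebra.comulAlgHom_apply, Coalgebra.lTensor_counit_comul,
      TensorProduct.rid_tmul, one_smul]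
  rw [key]
  exact hI x _

lemma good_pow {qt : QuasiTriangular k H} {B : Subalgebra k (Lgn g n qt)} {V : FDRep k H}
    (hV : good qt B V) (N : ℕ) : good qt B (V.pow (N + 1)) := by
  induction N with
  | zero => exact good_tensor_trivial hV
  | succ m ih => exact good_tensor hV ih

/-- The left regular representation of `H`. -/
def Hreg : FDRep k H := { carrier := H, rep := Algebra.lmul k H }

/-- A two-dimensional trivial module. -/
def W2 : FDRep k H :=
  { carrier := k × k,
    rep := (Algebra.ofId k (Module.End k (k × k))).comp (Bialgebra.counitAlgHom k H) }

/-- An auxiliary module of dimension `2 dim H ≥ 2` whose matrix coefficients exhaust `H*`. -/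
def I0 : FDRep k H := (Hreg (k := k) (H := H)).tensor W2

lemma I0_rep_lam (φ : Module.Dual k H) :
    ∃ lam : Module.Dual k (Module.End k (H ⊗[k] (k × k))),
      lam ∘ₗ (I0 (k := k) (H := H)).rep.toLinearMap = φ := by
  classical
  let red : H ⊗[k] (k × k) →ₗ[k] H :=
    (TensorProduct.rid k H).toLinearMap ∘ₗ LinearMap.lTensor H (LinearMap.fst k k k)
  let ev : Module.End k (H ⊗[k] (k × k)) →ₗ[k] H ⊗[k] (k × k) :=
    LinearMap.applyₗ ((1 : H) ⊗ₜ[k] ((1, 0) : k × k))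
  refine ⟨φ ∘ₗ red ∘ₗ ev, ?_⟩
  apply LinearMap.ext; intro h
  have claim : ∀ u : H ⊗[k] H,
      red ((Module.endTensorEndAlgHom (R := k) (S := k) (A := k)
        ((Algebra.TensorProduct.map (Hreg (k := k) (H := H)).rep (W2 (k := k) (H := H)).rep) u))
          ((1 : H) ⊗ₜ[k] ((1, 0) : k × k)))
      = (TensorProduct.rid k H) ((LinearMap.lTensor H (Coalgebra.counit (R := k))) u) := by
    intro u
    induction u using TensorProduct.induction_on with
    | zero => simp; exact LinearMap.map_zero red
    | tmul a b =>
      have hW2 : (W2 (k := k) (H := H)).rep b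
          = (Coalgebra.counit (R := k) b) •
            (1 : Module.End k (W2 (k := k) (H := H)).carrier) := by
        apply LinearMap.ext; intro c
        rfl
      rw [Algebra.TensorProduct.map_tmul, hW2, tmul_smul, map_smul]
      simp [Module.endTensorEndAlgHom_apply, red, Hreg, TensorProduct.rid_tmul,
        LinearMap.lTensor_tmul, map_smul, smul_smul]
      change (TensorProduct.rid k H) (LinearMap.lTensor H (LinearMap.fst k k k)
        (Coalgebra.counit (R := k) b • ((a * 1) ⊗ₜ[k] ((1, 0) : k × k)))) = _
      simp
    | add u v hu hv =>
      simp only [map_add, LinearMap.add_apply]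
      exact (LinearMap.map_add red _ _).trans (congrArg₂ (· + ·) hu hv)
  have hrep : (I0 (k := k) (H := H)).rep h
      = (Module.endTensorEndAlgHom (R := k) (S := k) (A := k))
        ((Algebra.TensorProduct.map (Hreg (k := k) (H := H)).rep (W2 (k := k) (H := H)).rep)
          (Bialgebra.comulAlgHom k H h)) := rfl
  show φ (red (ev ((I0 (k := k) (H := H)).rep h))) = φ h
  have hev : ev ((I0 (k := k) (H := H)).rep h)
      = ((I0 (k := k) (H := H)).rep h) ((1 : H) ⊗ₜ[k] ((1, 0) : k × k)) := rfl
  rw [hev, hrep]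
  refine Eq.trans (congrArg φ (claim _)) ?_
  rw [Bialgebra.comulAlgHom_apply, Coalgebra.lTensor_counit_comul,
    TensorProduct.rid_tmul, one_smul]

end Proofs

/-- if every finite-dimensional left `H`-module is (isomorphic to) a direct
summand of some tensor power `V^{⊗N}`, then `L_{g,n}(H)` is generated as a `k`-algebra by the
entries `(id ⊗ λ)(X(i)_V)` of the matrices `B(i)_V, A(i)_V, M(j)_V`. -/
theorem stmt9 (g n : ℕ) (qt : QuasiTriangular k H) (V : FDRep k H)
    (hV : ∀ I : FDRep k H, ∃ (N : ℕ)
      (f : I.carrier →ₗ[k] (V.pow N).carrier) (p : (V.pow N).carrier →ₗ[k] I.carrier),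
        (∀ h : H, ((V.pow N).rep h) ∘ₗ f = f ∘ₗ (I.rep h)) ∧
        (∀ h : H, (I.rep h) ∘ₗ p = p ∘ₗ ((V.pow N).rep h)) ∧
        p ∘ₗ f = LinearMap.id) :
    Algebra.adjoin k
      { t : Lgn g n qt | ∃ (x : GenIdx g n) (lam : Module.Dual k (Module.End k V.carrier)),
          t = cntr lam (genL qt x V.rep.toLinearMap) } = ⊤ := by
  classical
  let S : Set (Lgn g n qt) :=
    { t : Lgn g n qt | ∃ (x : GenIdx g n) (lam : Module.Dual k (Module.End k V.carrier)),
        t = cntr lam (genL qt x V.rep.toLinearMap) }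
  show Algebra.adjoin k S = ⊤
  have hgoodV : good qt (Algebra.adjoin k S) V := fun x lam =>
    Algebra.subset_adjoin ⟨x, lam, (cntr_genL qt x V.rep.toLinearMap lam).symm⟩
  have hne : (1 : H) ≠ 0 := fun h10 => by
    have h11 := congrArg (Bialgebra.counitAlgHom k H) h10
    rw [map_one, map_zero] at h11
    exact one_ne_zero h11
  have hnt : Nontrivial H := nontrivial_of_ne 1 0 hne
  have key : ∀ (x : GenIdx g n) (φ : Module.Dual k H),
      lgnProj g n qt (eT x φ) ∈ Algebra.adjoin k S := by
    intro x φ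
    obtain ⟨N, f, p, hf, hp, hpf⟩ := hV (I0 (k := k) (H := H))
    obtain ⟨lam, hlam⟩ := I0_rep_lam (k := k) (H := H) φ
    cases N with
    | zero =>
      exfalso
      have hinj : Function.Injective f := by
        intro a b hab
        have ha := DFunLike.congr_fun hpf a
        have hb := DFunLike.congr_fun hpf b
        simp only [LinearMap.comp_apply, LinearMap.id_apply] at ha hb
        rw [← ha, ← hb, hab]
      have hle := LinearMap.finrank_le_finrank_of_injective hinj
      have h2 : Module.finrank k ((V.pow 0).carrier) = 1 := Module.finrank_self k
      have h3 : Module.finrank k ((I0 (k := k) (H := H)).carrier)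
          = Module.finrank k H * 2 := by
        show Module.finrank k (H ⊗[k] (k × k)) = Module.finrank k H * 2
        rw [Module.finrank_tensorProduct, Module.finrank_prod, Module.finrank_self]
      have h4 : 0 < Module.finrank k H := Module.finrank_pos
      omega
    | succ N =>
      let conj : Module.End k ((V.pow (N + 1)).carrier) →ₗ[k] Module.End k (H ⊗[k] (k × k)) :=
        (LinearMap.llcomp k (H ⊗[k] (k × k)) ((V.pow (N + 1)).carrier) (H ⊗[k] (k × k)) p) ∘ₗ
          (LinearMap.lcomp k ((V.pow (N + 1)).carrier) f)
      have hφ : (lam ∘ₗ conj) ∘ₗ (V.pow (N + 1)).rep.toLinearMap = φ := by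
        apply LinearMap.ext; intro h
        have h1 : p ∘ₗ (((V.pow (N + 1)).rep h) ∘ₗ f) = (I0 (k := k) (H := H)).rep h := by
          rw [← LinearMap.comp_assoc, ← hp h, LinearMap.comp_assoc, hpf, LinearMap.comp_id]
        have h2 : conj ((V.pow (N + 1)).rep h) = p ∘ₗ (((V.pow (N + 1)).rep h) ∘ₗ f) := rfl
        show lam (conj ((V.pow (N + 1)).rep h)) = φ h
        rw [h2, h1]
        exact DFunLike.congr_fun hlam h
      rw [show φ = (lam ∘ₗ conj) ∘ₗ (V.pow (N + 1)).rep.toLinearMap from hφ.symm]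
      exact good_pow hgoodV N x (lam ∘ₗ conj)
  rw [eq_top_iff]
  rintro y -
  obtain ⟨t, rfl⟩ := RingQuot.mkAlgHom_surjective k (lgnRel g n qt) y
  induction t using TensorAlgebra.induction with
  | algebraMap r =>
    rw [AlgHom.commutes]
    exact Subalgebra.algebraMap_mem _ r
  | ι v =>
    have hv : v = ∑ x : GenIdx g n,
        (LinearMap.single k (fun _ : GenIdx g n => Module.Dual k H) x) (v x) :=
      (Finset.univ_sum_single v).symm
    rw [hv, map_sum, map_sum]
    exact Subalgebra.sum_mem _ fun x _ => key x (v x)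
  | mul a b ha hb =>
    rw [map_mul]
    exact mul_mem ha hb
  | add a b ha hb =>
    rw [map_add]
    exact add_mem ha hb


end CombQuant

end
end

section
/- The subspaces J₁ and J₂ are invariant under both operators: A(J₁) ⊆ J₁, B(J₁) ⊆ J₁, A(J₂) ⊆ J₂ and B(J₂) ⊆ J₂. -/
noncomputable section

/-- Index set for the GTA basis: `x⁺_s` (s = 1..p), `x⁻_s` (s = 1..p), `g_s` (s = 1..p-1). -/
abbrev GTAIdx (p : ℕ) := (Fin p ⊕ Fin p) ⊕ Fin (p - 1)

/-- The underlying (3p-1)-dimensional complex vector space. -/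
abbrev GTA (p : ℕ) := GTAIdx p → ℂ

/-- `ε = exp(iπ/2p)`. -/
def eps (p : ℕ) : ℂ := Complex.exp (Real.pi * Complex.I / (2 * p))

/-- The basis vector `x⁺_s` for `1 ≤ s ≤ p`, and `0` otherwise. -/
def xp (p : ℕ) (s : ℕ) : GTA p :=
  if h : 1 ≤ s ∧ s ≤ p then Pi.single (Sum.inl (Sum.inl ⟨s - 1, by omega⟩)) 1 else 0

/-- The basis vector `x⁻_s` for `1 ≤ s ≤ p`, and `0` otherwise. -/
def xm (p : ℕ) (s : ℕ) : GTA p :=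
  if h : 1 ≤ s ∧ s ≤ p then Pi.single (Sum.inl (Sum.inr ⟨s - 1, by omega⟩)) 1 else 0

/-- The basis vector `g_s` for `1 ≤ s ≤ p-1`, and `0` otherwise. -/
def gv (p : ℕ) (s : ℕ) : GTA p :=
  if h : 1 ≤ s ∧ s ≤ p - 1 then Pi.single (Sum.inr ⟨s - 1, by omega⟩) 1 else 0

/-- The quantum integer `[s] = (ε^{2s} - ε^{-2s})/(ε² - ε^{-2})`. -/
def br (p : ℕ) (s : ℕ) : ℂ :=
  ((eps p) ^ (2 * s) - (eps p)⁻¹ ^ (2 * s)) / ((eps p) ^ 2 - (eps p)⁻¹ ^ 2)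

/-- The operator `A` (action of the curve `a`) in the GTA basis. -/
def Aop (p : ℕ) : Module.End ℂ (GTA p) :=
  (Pi.basisFun ℂ (GTAIdx p)).constr ℂ fun i =>
    match i with
    | .inl (.inl i) =>
        (-((eps p) ^ (2 * (i.1 + 1)) + (eps p)⁻¹ ^ (2 * (i.1 + 1)))) • xp p (i.1 + 1)
    | .inl (.inr i) =>
        (((eps p) ^ (2 * (i.1 + 1)) + (eps p)⁻¹ ^ (2 * (i.1 + 1)))) • xm p (i.1 + 1)
    | .inr i =>
        (-((eps p) ^ (2 * (i.1 + 1)) + (eps p)⁻¹ ^ (2 * (i.1 + 1)))) • gv p (i.1 + 1)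
          - (((eps p) ^ 2 - (eps p)⁻¹ ^ 2) ^ 2) • (xp p (i.1 + 1) + xm p (p - (i.1 + 1)))

/-- The operator `B` (action of the curve `b`) in the GTA basis. -/
def Bop (p : ℕ) : Module.End ℂ (GTA p) :=
  (Pi.basisFun ℂ (GTAIdx p)).constr ℂ fun i =>
    match i with
    | .inl (.inl i) =>
        if i.1 + 1 = p then (2 : ℂ) • xp p (p - 1) + (2 : ℂ) • xm p 1
        else xp p i.1 + xp p (i.1 + 2)
    | .inl (.inr i) =>
        if i.1 + 1 = p then (2 : ℂ) • xm p (p - 1) + (2 : ℂ) • xp p 1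
        else xm p i.1 + xm p (i.1 + 2)
    | .inr i =>
        (br p i.1 / br p (i.1 + 1)) • gv p i.1
          + (br p (i.1 + 2) / br p (i.1 + 1)) • gv p (i.1 + 2)

/-- `J₁`: the span of the vectors `x⁺_s + x⁻_{p-s}` (1 ≤ s ≤ p-1), `x⁺_p` and `x⁻_p`. -/
def J1 (p : ℕ) : Submodule ℂ (GTA p) :=
  Submodule.span ℂ
    ((Set.range fun s : Fin (p - 1) => xp p (s.1 + 1) + xm p (p - (s.1 + 1)))
      ∪ {xp p p, xm p p})

/-- `J₂ = J₁ + span{x⁺_s : 1 ≤ s ≤ p-1}`. -/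
def J2 (p : ℕ) : Submodule ℂ (GTA p) :=
  J1 p ⊔ Submodule.span ℂ (Set.range fun s : Fin (p - 1) => xp p (s.1 + 1))

end

noncomputable section

lemma constr_single (p : ℕ) (f : GTAIdx p → GTA p) (i : GTAIdx p) :
    ((Pi.basisFun ℂ (GTAIdx p)).constr ℂ f) (Pi.single i 1) = f i := by
  rw [← Pi.basisFun_apply, Module.Basis.constr_basis]

lemma eps_ne_zero (p : ℕ) : eps p ≠ 0 := Complex.exp_ne_zero _

lemma eps_pow_2p (p : ℕ) (hp : 1 ≤ p) : eps p ^ (2 * p) = -1 := by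
  rw [eps, ← Complex.exp_nat_mul]
  have hp0 : (p : ℂ) ≠ 0 := Nat.cast_ne_zero.mpr (by omega)
  have : ((2 * p : ℕ) : ℂ) * (Real.pi * Complex.I / (2 * p)) = Real.pi * Complex.I := by
    push_cast; field_simp
  rw [this, Complex.exp_pi_mul_I]

lemma lam_sub (p s : ℕ) (hp : 1 ≤ p) (hs : s ≤ p) :
    eps p ^ (2 * (p - s)) + (eps p)⁻¹ ^ (2 * (p - s))
      = -(eps p ^ (2 * s) + (eps p)⁻¹ ^ (2 * s)) := by
  have h0 : eps p ^ (2 * s) ≠ 0 := pow_ne_zero _ (eps_ne_zero p)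
  have h1 : eps p ^ (2 * (p - s)) ≠ 0 := pow_ne_zero _ (eps_ne_zero p)
  have key : eps p ^ (2 * (p - s)) * eps p ^ (2 * s) = -1 := by
    rw [← pow_add, show 2 * (p - s) + 2 * s = 2 * p by omega, eps_pow_2p p hp]
  rw [inv_pow, inv_pow]
  field_simp
  ring_nf
  ring_nf at key
  linear_combination (eps p ^ (2*s) + eps p ^ (2*(p-s))) * key

lemma xp_zero (p : ℕ) : xp p 0 = 0 := by simp [xp]
lemma xm_zero (p : ℕ) : xm p 0 = 0 := by simp [xm]

lemma Aop_xp (p s : ℕ) (h1 : 1 ≤ s) (h2 : s ≤ p) :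
    Aop p (xp p s) = (-(eps p ^ (2 * s) + (eps p)⁻¹ ^ (2 * s))) • xp p s := by
  have hs : s - 1 + 1 = s := by omega
  conv_lhs => rw [xp, dif_pos ⟨h1, h2⟩, Aop, constr_single]
  dsimp only
  rw [hs]

lemma Aop_xm (p s : ℕ) (h1 : 1 ≤ s) (h2 : s ≤ p) :
    Aop p (xm p s) = ((eps p ^ (2 * s) + (eps p)⁻¹ ^ (2 * s))) • xm p s := by
  have hs : s - 1 + 1 = s := by omega
  conv_lhs => rw [xm, dif_pos ⟨h1, h2⟩, Aop, constr_single]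
  dsimp only
  rw [hs]

lemma Bop_xp (p s : ℕ) (h1 : 1 ≤ s) (h2 : s ≤ p - 1) :
    Bop p (xp p s) = xp p (s - 1) + xp p (s + 1) := by
  have hs : s - 1 + 1 = s := by omega
  have hs2 : s - 1 + 2 = s + 1 := by omega
  conv_lhs => rw [xp, dif_pos ⟨h1, by omega⟩, Bop, constr_single]
  dsimp only
  rw [if_neg (by omega), hs2]

lemma Bop_xm (p s : ℕ) (h1 : 1 ≤ s) (h2 : s ≤ p - 1) :
    Bop p (xm p s) = xm p (s - 1) + xm p (s + 1) := by
  have hs2 : s - 1 + 2 = s + 1 := by omega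
  conv_lhs => rw [xm, dif_pos ⟨h1, by omega⟩, Bop, constr_single]
  dsimp only
  rw [if_neg (by omega), hs2]

lemma Bop_xp_p (p : ℕ) (hp : 1 ≤ p) :
    Bop p (xp p p) = (2 : ℂ) • xp p (p - 1) + (2 : ℂ) • xm p 1 := by
  conv_lhs => rw [xp, dif_pos ⟨hp, le_refl p⟩, Bop, constr_single]
  dsimp only
  rw [if_pos (by omega)]

lemma Bop_xm_p (p : ℕ) (hp : 1 ≤ p) :
    Bop p (xm p p) = (2 : ℂ) • xm p (p - 1) + (2 : ℂ) • xp p 1 := by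
  conv_lhs => rw [xm, dif_pos ⟨hp, le_refl p⟩, Bop, constr_single]
  dsimp only
  rw [if_pos (by omega)]

end
noncomputable section

lemma pair_mem (p : ℕ) (hp : 2 ≤ p) (t : ℕ) (ht : t ≤ p) :
    xp p t + xm p (p - t) ∈ J1 p := by
  rcases Nat.eq_zero_or_pos t with h0 | h1
  · subst h0
    rw [xp_zero, zero_add, Nat.sub_zero]
    exact Submodule.subset_span (Or.inr (by right; rfl))
  · rcases eq_or_lt_of_le ht with hpe | hlt
    · subst hpe
      rw [Nat.sub_self, xm_zero, add_zero]
      exact Submodule.subset_span (Or.inr (by left; rfl))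
    · refine Submodule.subset_span (Or.inl ⟨⟨t - 1, by omega⟩, ?_⟩)
      simp only
      rw [show t - 1 + 1 = t by omega]

lemma xp_mem_J2 (p : ℕ) (hp : 2 ≤ p) (t : ℕ) (ht : t ≤ p) : xp p t ∈ J2 p := by
  rcases Nat.eq_zero_or_pos t with h0 | h1
  · subst h0; rw [xp_zero]; exact zero_mem _
  · rcases eq_or_lt_of_le ht with hpe | hlt
    · subst hpe
      exact Submodule.mem_sup_left (Submodule.subset_span (Or.inr (by left; rfl)))
    · refine Submodule.mem_sup_right (Submodule.subset_span ⟨⟨t - 1, by omega⟩, ?_⟩)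
      simp only
      rw [show t - 1 + 1 = t by omega]

lemma J1_A (p : ℕ) (hp : 2 ≤ p) : ∀ v ∈ J1 p, Aop p v ∈ J1 p := by
  intro v hv
  have h : J1 p ≤ (J1 p).comap (Aop p) := by
    rw [J1]
    refine Submodule.span_le.mpr ?_
    rintro x (⟨s, rfl⟩ | hx)
    · simp only [SetLike.mem_coe, Submodule.mem_comap, map_add]
      have hs1 : 1 ≤ s.1 + 1 := by omega
      have hs2 : s.1 + 1 ≤ p := by omega
      have hm1 : 1 ≤ p - (s.1 + 1) := by omega
      have hm2 : p - (s.1 + 1) ≤ p := by omega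
      rw [Aop_xp p _ hs1 hs2, Aop_xm p _ hm1 hm2, lam_sub p (s.1 + 1) (by omega) hs2,
        ← smul_add]
      exact Submodule.smul_mem _ _ (pair_mem p hp (s.1 + 1) hs2)
    · rcases hx with h | h
      · subst h
        simp only [SetLike.mem_coe, Submodule.mem_comap]
        rw [Aop_xp p p (by omega) le_rfl]
        exact Submodule.smul_mem _ _
          (Submodule.subset_span (Or.inr (by left; rfl)))
      · simp only [Set.mem_singleton_iff] at h
        subst h
        simp only [SetLike.mem_coe, Submodule.mem_comap]
        rw [Aop_xm p p (by omega) le_rfl]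
        exact Submodule.smul_mem _ _
          (Submodule.subset_span (Or.inr (by right; rfl)))
  exact h hv

lemma J1_B (p : ℕ) (hp : 2 ≤ p) : ∀ v ∈ J1 p, Bop p v ∈ J1 p := by
  intro v hv
  have h : J1 p ≤ (J1 p).comap (Bop p) := by
    rw [J1]
    refine Submodule.span_le.mpr ?_
    rintro x (⟨s, rfl⟩ | hx)
    · simp only [SetLike.mem_coe, Submodule.mem_comap, map_add]
      have hs1 : 1 ≤ s.1 + 1 := by omega
      have hs2 : s.1 + 1 ≤ p - 1 := by omega
      have hm1 : 1 ≤ p - (s.1 + 1) := by omega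
      have hm2 : p - (s.1 + 1) ≤ p - 1 := by omega
      rw [Bop_xp p _ hs1 hs2, Bop_xm p _ hm1 hm2]
      rw [show s.1 + 1 - 1 = s.1 by omega, show p - (s.1 + 1) - 1 = p - (s.1 + 2) by omega,
        show p - (s.1 + 1) + 1 = p - s.1 by omega]
      have e1 := pair_mem p hp s.1 (by omega)
      have e2 := pair_mem p hp (s.1 + 2) (by omega)
      have : xp p s.1 + xp p (s.1 + 1 + 1) + (xm p (p - (s.1 + 2)) + xm p (p - s.1))
          = (xp p s.1 + xm p (p - s.1)) + (xp p (s.1 + 2) + xm p (p - (s.1 + 2))) := by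
        rw [show s.1 + 1 + 1 = s.1 + 2 by omega]; abel
      rw [this]
      exact add_mem e1 e2
    · rcases hx with h | h
      · subst h
        simp only [SetLike.mem_coe, Submodule.mem_comap]
        rw [Bop_xp_p p (by omega), ← smul_add]
        have e := pair_mem p hp (p - 1) (by omega)
        rw [show p - (p - 1) = 1 by omega] at e
        exact Submodule.smul_mem _ _ e
      · simp only [Set.mem_singleton_iff] at h
        subst h
        simp only [SetLike.mem_coe, Submodule.mem_comap]
        rw [Bop_xm_p p (by omega), ← smul_add]
        have e := pair_mem p hp 1 (by omega)
        rw [add_comm (xp p 1)] at e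
        exact Submodule.smul_mem _ _ e
  exact h hv

theorem stmt10' (p : ℕ) (hp : 2 ≤ p) :
    (∀ v ∈ J1 p, Aop p v ∈ J1 p) ∧ (∀ v ∈ J1 p, Bop p v ∈ J1 p) ∧
    (∀ v ∈ J2 p, Aop p v ∈ J2 p) ∧ (∀ v ∈ J2 p, Bop p v ∈ J2 p) := by
  refine ⟨J1_A p hp, J1_B p hp, ?_, ?_⟩
  · intro v hv
    have h : J2 p ≤ (J2 p).comap (Aop p) := by
      rw [J2]
      refine sup_le ?_ ?_
      · intro x hx
        exact Submodule.mem_sup_left (J1_A p hp x hx)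
      · refine Submodule.span_le.mpr ?_
        rintro x ⟨s, rfl⟩
        simp only [SetLike.mem_coe, Submodule.mem_comap]
        rw [Aop_xp p _ (by omega) (by omega : s.1 + 1 ≤ p)]
        exact Submodule.smul_mem _ _
          (Submodule.mem_sup_right (Submodule.subset_span ⟨s, rfl⟩))
    exact h hv
  · intro v hv
    have h : J2 p ≤ (J2 p).comap (Bop p) := by
      rw [J2]
      refine sup_le ?_ ?_
      · intro x hx
        exact Submodule.mem_sup_left (J1_B p hp x hx)
      · refine Submodule.span_le.mpr ?_
        rintro x ⟨s, rfl⟩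
        simp only [SetLike.mem_coe, Submodule.mem_comap]
        rw [Bop_xp p _ (by omega) (by omega : s.1 + 1 ≤ p - 1)]
        rw [show s.1 + 1 - 1 = s.1 by omega]
        exact add_mem (xp_mem_J2 p hp s.1 (by omega)) (xp_mem_J2 p hp (s.1 + 2) (by omega))
    exact h hv

end

/-- the subspaces `J₁` and `J₂` are invariant under both operators `A` and `B`. -/
theorem stmt10 (p : ℕ) (hp : 2 ≤ p) :
    (∀ v ∈ J1 p, Aop p v ∈ J1 p) ∧ (∀ v ∈ J1 p, Bop p v ∈ J1 p) ∧
    (∀ v ∈ J2 p, Aop p v ∈ J2 p) ∧ (∀ v ∈ J2 p, Bop p v ∈ J2 p) := by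
  exact stmt10' p hp
end

section
/- The factor J₂/J₁ is simple under the two operators: every subspace W with J₁ ⊆ W ⊆ J₂, A(W) ⊆ W and B(W) ⊆ W equals J₁ or J₂. -/
noncomputable section
namespace S12

lemma xp_app_xp (p t : ℕ) (j : Fin p) :
    xp p t (Sum.inl (Sum.inl j)) = if t = j.1 + 1 then 1 else 0 := by
  unfold xp
  split_ifs with h h2 h3 <;>
    simp_all only [Pi.single_apply, Sum.inl.injEq, Fin.ext_iff, Fin.val_mk, Pi.zero_apply] <;>
    (try split_ifs) <;> first | rfl | (exfalso; omega) | simp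

lemma xp_app_xm (p t : ℕ) (j : Fin p) : xp p t (Sum.inl (Sum.inr j)) = 0 := by
  unfold xp; split_ifs <;> simp [Pi.single_apply]

lemma xp_app_g (p t : ℕ) (j : Fin (p - 1)) : xp p t (Sum.inr j) = 0 := by
  unfold xp; split_ifs <;> simp [Pi.single_apply]

lemma xm_app_xm (p t : ℕ) (j : Fin p) :
    xm p t (Sum.inl (Sum.inr j)) = if t = j.1 + 1 then 1 else 0 := by
  unfold xm
  split_ifs with h h2 h3 <;>
    simp_all only [Pi.single_apply, Sum.inl.injEq, Sum.inr.injEq, Fin.ext_iff, Fin.val_mk,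
      Pi.zero_apply] <;> (try split_ifs) <;> first | rfl | (exfalso; omega) | simp

lemma xm_app_xp (p t : ℕ) (j : Fin p) : xm p t (Sum.inl (Sum.inl j)) = 0 := by
  unfold xm; split_ifs <;> simp [Pi.single_apply]

lemma xm_app_g (p t : ℕ) (j : Fin (p - 1)) : xm p t (Sum.inr j) = 0 := by
  unfold xm; split_ifs <;> simp [Pi.single_apply]

lemma gv_app_xp (p t : ℕ) (j : Fin p) : gv p t (Sum.inl (Sum.inl j)) = 0 := by
  unfold gv; split_ifs <;> simp [Pi.single_apply]

lemma gv_app_xm (p t : ℕ) (j : Fin p) : gv p t (Sum.inl (Sum.inr j)) = 0 := by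
  unfold gv; split_ifs <;> simp [Pi.single_apply]

lemma xp_eq_single (p : ℕ) (i : Fin p) :
    xp p (i.1 + 1) = Pi.single (Sum.inl (Sum.inl i)) 1 := by
  unfold xp
  rw [dif_pos ⟨by omega, by omega⟩]
  congr 1

lemma xm_eq_single (p : ℕ) (i : Fin p) :
    xm p (i.1 + 1) = Pi.single (Sum.inl (Sum.inr i)) 1 := by
  unfold xm
  rw [dif_pos ⟨by omega, by omega⟩]
  congr 1

lemma gv_eq_single (p : ℕ) (i : Fin (p - 1)) :
    gv p (i.1 + 1) = Pi.single (Sum.inr i) 1 := by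
  unfold gv
  rw [dif_pos ⟨by omega, by omega⟩]
  congr 1

/-- The quotient projection realizing `J₂/J₁` concretely. -/
def pim (p : ℕ) : GTA p →ₗ[ℂ] (Fin (p - 1) → ℂ) where
  toFun v := fun s => v (Sum.inl (Sum.inl ⟨s.1, by omega⟩))
      - v (Sum.inl (Sum.inr ⟨p - 2 - s.1, by omega⟩))
  map_add' u v := by funext s; simp only [Pi.add_apply]; ring
  map_smul' c v := by funext s; simp only [Pi.smul_apply, smul_eq_mul, RingHom.id_apply]; ring

lemma pim_xp (p t : ℕ) :
    pim p (xp p t) = if h : 1 ≤ t ∧ t ≤ p - 1 then Pi.single (⟨t - 1, by omega⟩ : Fin (p - 1)) 1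
      else 0 := by
  funext s
  have hs : s.1 < p - 1 := s.2
  simp only [pim, LinearMap.coe_mk, AddHom.coe_mk, xp_app_xp, xp_app_xm, sub_zero]
  split_ifs with h1 h2 h3 <;>
    simp_all only [Pi.single_apply, Fin.ext_iff, Fin.val_mk, Pi.zero_apply] <;>
    (try split_ifs) <;> first | rfl | (exfalso; omega) | simp

lemma pim_xm (p t : ℕ) :
    pim p (xm p t) = if h : 1 ≤ t ∧ t ≤ p - 1 then
      -Pi.single (⟨p - 1 - t, by omega⟩ : Fin (p - 1)) 1 else 0 := by
  funext s
  have hs : s.1 < p - 1 := s.2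
  simp only [pim, LinearMap.coe_mk, AddHom.coe_mk, xm_app_xm, xm_app_xp, zero_sub]
  split_ifs with h1 h2 h3 <;>
    simp_all only [Pi.single_apply, Fin.ext_iff, Fin.val_mk, Pi.zero_apply, Pi.neg_apply,
      neg_inj, neg_eq_zero, neg_zero, neg_neg] <;>
    (try split_ifs) <;> first | rfl | (exfalso; omega) | simp

lemma pim_gv (p t : ℕ) : pim p (gv p t) = 0 := by
  funext s
  simp [pim, gv_app_xp, gv_app_xm]

end S12
end
noncomputable section
namespace S12
open Complex

lemma eps_pow (p k : ℕ) (hp : p ≠ 0) :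
    eps p ^ (2 * k) = Complex.exp ((((k : ℝ) * Real.pi / p : ℝ) : ℂ) * Complex.I) := by
  rw [eps, ← Complex.exp_nat_mul]
  congr 1
  have hp' : (p : ℂ) ≠ 0 := Nat.cast_ne_zero.mpr hp
  push_cast
  field_simp

lemma eps_inv_pow (p k : ℕ) (hp : p ≠ 0) :
    (eps p)⁻¹ ^ (2 * k) = Complex.exp ((((-(k : ℝ) * Real.pi / p) : ℝ) : ℂ) * Complex.I) := by
  rw [eps, ← Complex.exp_neg, ← Complex.exp_nat_mul]
  congr 1
  have hp' : (p : ℂ) ≠ 0 := Nat.cast_ne_zero.mpr hp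
  push_cast
  field_simp

lemma ceval (p k : ℕ) (hp : p ≠ 0) :
    eps p ^ (2 * k) + (eps p)⁻¹ ^ (2 * k)
      = ((2 * Real.cos ((k : ℝ) * Real.pi / p) : ℝ) : ℂ) := by
  rw [eps_pow p k hp, eps_inv_pow p k hp, Complex.exp_mul_I, Complex.exp_mul_I]
  have h1 : ((-(k : ℝ) * Real.pi / p : ℝ) : ℂ) = -(((k : ℝ) * Real.pi / p : ℝ) : ℂ) := by
    push_cast; ring
  rw [h1, Complex.cos_neg, Complex.sin_neg, Complex.ofReal_mul, Complex.ofReal_cos]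
  push_cast
  ring

/-- The diagonal of the operator `A` on the quotient. -/
def dvec (p : ℕ) (s : Fin (p - 1)) : ℂ :=
  -(eps p ^ (2 * (s.1 + 1)) + (eps p)⁻¹ ^ (2 * (s.1 + 1)))

lemma dvec_inj (p : ℕ) (hp : 2 ≤ p) : Function.Injective (dvec p) := by
  intro s t h
  have hp0 : p ≠ 0 := by omega
  rw [dvec, dvec, ceval p _ hp0, ceval p _ hp0, neg_inj, Complex.ofReal_inj] at h
  have h2 : Real.cos (((s.1 + 1 : ℕ) : ℝ) * Real.pi / p)
      = Real.cos (((t.1 + 1 : ℕ) : ℝ) * Real.pi / p) := by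
    have := mul_left_cancel₀ (two_ne_zero (α := ℝ)) h
    exact this
  have hpR : (0 : ℝ) < p := by positivity
  have hmem : ∀ u : Fin (p - 1), ((u.1 + 1 : ℕ) : ℝ) * Real.pi / p ∈ Set.Icc 0 Real.pi := by
    intro u
    constructor
    · positivity
    · rw [div_le_iff₀ hpR]
      have hu : ((u.1 + 1 : ℕ) : ℝ) ≤ (p : ℝ) := by
        have : u.1 + 1 ≤ p := by have := u.2; omega
        exact_mod_cast this
      nlinarith [Real.pi_pos]
  have h3 := Real.injOn_cos (hmem s) (hmem t) h2
  have hπ : Real.pi ≠ 0 := ne_of_gt Real.pi_pos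
  have hp' : (p : ℝ) ≠ 0 := ne_of_gt hpR
  have h4 : ((s.1 + 1 : ℕ) : ℝ) = ((t.1 + 1 : ℕ) : ℝ) := by
    rwa [div_left_inj' hp', mul_left_inj' hπ] at h3
  have h5 : s.1 + 1 = t.1 + 1 := by exact_mod_cast h4
  exact Fin.ext (by omega)

lemma c_neg (p k : ℕ) (hk : k ≤ p) (hp : p ≠ 0) :
    eps p ^ (2 * (p - k)) + (eps p)⁻¹ ^ (2 * (p - k))
      = -(eps p ^ (2 * k) + (eps p)⁻¹ ^ (2 * k)) := by
  rw [ceval p _ hp, ceval p _ hp]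
  have hpR : (0 : ℝ) < p := by positivity
  have h1 : (((p - k : ℕ) : ℝ)) = (p : ℝ) - k := by
    rw [Nat.cast_sub hk]
  have h2 : ((p - k : ℕ) : ℝ) * Real.pi / p = Real.pi - (k : ℝ) * Real.pi / p := by
    rw [h1]; field_simp
  rw [h2, Real.cos_pi_sub]
  push_cast
  ring

/-- The operator `A` on the quotient: diagonal `dvec`. -/
def Abar (p : ℕ) : Module.End ℂ (Fin (p - 1) → ℂ) where
  toFun v := fun s => dvec p s * v s
  map_add' u v := by funext s; simp only [Pi.add_apply]; ring
  map_smul' c v := by funext s; simp only [Pi.smul_apply, smul_eq_mul, RingHom.id_apply]; ring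

/-- The operator `B` on the quotient: symmetric tridiagonal with `1`s off-diagonal. -/
def Bbar (p : ℕ) : Module.End ℂ (Fin (p - 1) → ℂ) where
  toFun v := fun s =>
    (if h : s.1 + 1 < p - 1 then v ⟨s.1 + 1, h⟩ else 0)
      + (if h : 1 ≤ s.1 then v ⟨s.1 - 1, by omega⟩ else 0)
  map_add' u v := by
    funext s
    simp only [Pi.add_apply]
    split_ifs <;> first | ring | simp
  map_smul' c v := by
    funext s
    simp only [Pi.smul_apply, smul_eq_mul, RingHom.id_apply]
    split_ifs <;> first | ring | simp

end S12
end
noncomputable section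
namespace S12

lemma interA (p : ℕ) (hp : 2 ≤ p) :
    (pim p) ∘ₗ (Aop p : GTA p →ₗ[ℂ] GTA p) = (Abar p : _) ∘ₗ pim p := by
  apply Module.Basis.ext (Pi.basisFun ℂ (GTAIdx p))
  intro i
  simp only [LinearMap.comp_apply, Aop, Module.Basis.constr_basis]
  rcases i with (i | i) | i <;> dsimp only <;> rw [Pi.basisFun_apply]
  · -- x⁺ row
    rw [← xp_eq_single, map_smul, pim_xp]
    by_cases hi : i.1 + 1 ≤ p - 1
    · rw [dif_pos ⟨by omega, hi⟩]
      funext s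
      simp only [Abar, LinearMap.coe_mk, AddHom.coe_mk, Pi.smul_apply, smul_eq_mul,
        Pi.single_apply]
      by_cases hsi : s = (⟨i.1 + 1 - 1, by omega⟩ : Fin (p - 1))
      · subst hsi
        rw [if_pos rfl]
        simp only [dvec, Fin.val_mk, Nat.add_sub_cancel]
        try ring
      · rw [if_neg hsi]
        ring
    · rw [dif_neg (by omega)]
      simp
  · -- x⁻ row
    rw [← xm_eq_single, map_smul, pim_xm]
    by_cases hi : i.1 + 1 ≤ p - 1
    · rw [dif_pos ⟨by omega, hi⟩]
      funext s
      simp only [Abar, LinearMap.coe_mk, AddHom.coe_mk, Pi.smul_apply, smul_eq_mul,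
        Pi.neg_apply, Pi.single_apply]
      by_cases hsi : s = (⟨p - 1 - (i.1 + 1), by omega⟩ : Fin (p - 1))
      · subst hsi
        rw [if_pos rfl]
        simp only [dvec, Fin.val_mk]
        have he : p - 1 - (i.1 + 1) + 1 = p - (i.1 + 1) := by omega
        rw [he, c_neg p (i.1 + 1) (by omega) (by omega)]
        ring
      · rw [if_neg hsi]
        ring
    · rw [dif_neg (by omega)]
      simp
  · -- g row
    rw [← gv_eq_single, map_sub, map_smul, map_smul, map_add, pim_gv, pim_xp, pim_xm,
      smul_zero, map_zero, zero_sub]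
    have h1 : 1 ≤ i.1 + 1 ∧ i.1 + 1 ≤ p - 1 := ⟨by omega, by have := i.2; omega⟩
    have h2 : 1 ≤ p - (i.1 + 1) ∧ p - (i.1 + 1) ≤ p - 1 := by have := i.2; omega
    rw [dif_pos h1, dif_pos h2]
    have he : (⟨p - 1 - (p - (i.1 + 1)), by omega⟩ : Fin (p - 1))
        = (⟨i.1 + 1 - 1, by omega⟩ : Fin (p - 1)) := Fin.ext (by have := i.2; simp; omega)
    rw [he]
    simp

end S12
end
noncomputable section
namespace S12

set_option maxHeartbeats 2000000 in
lemma interB (p : ℕ) (hp : 2 ≤ p) :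
    (pim p) ∘ₗ (Bop p : GTA p →ₗ[ℂ] GTA p) = (Bbar p : _) ∘ₗ pim p := by
  apply Module.Basis.ext (Pi.basisFun ℂ (GTAIdx p))
  intro i
  simp only [LinearMap.comp_apply, Bop, Module.Basis.constr_basis]
  rcases i with (i | i) | i <;> dsimp only <;> rw [Pi.basisFun_apply]
  · -- x⁺ row
    rw [← xp_eq_single]
    by_cases hip : i.1 + 1 = p
    · rw [if_pos hip, map_add, map_smul, map_smul, pim_xp, pim_xm, pim_xp]
      funext s
      have hs : s.1 < p - 1 := s.2
      have hi : i.1 < p := i.2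
      simp only [Bbar, LinearMap.coe_mk, AddHom.coe_mk, Pi.add_apply, Pi.smul_apply,
        Pi.neg_apply, Pi.zero_apply, dite_apply, Pi.single_apply, smul_eq_mul,
        Fin.mk.injEq, Fin.ext_iff, Fin.val_mk, map_zero]
      split_ifs <;> first | rfl | (exfalso; omega) | norm_num
    · rw [if_neg hip, map_add, pim_xp, pim_xp, pim_xp]
      funext s
      have hs : s.1 < p - 1 := s.2
      have hi : i.1 < p := i.2
      simp only [Bbar, LinearMap.coe_mk, AddHom.coe_mk, Pi.add_apply, Pi.smul_apply,
        Pi.neg_apply, Pi.zero_apply, dite_apply, Pi.single_apply, smul_eq_mul,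
        Fin.mk.injEq, Fin.ext_iff, Fin.val_mk, map_zero]
      split_ifs <;> first | rfl | (exfalso; omega) | norm_num
  · -- x⁻ row
    rw [← xm_eq_single]
    by_cases hip : i.1 + 1 = p
    · rw [if_pos hip, map_add, map_smul, map_smul, pim_xm, pim_xp, pim_xm]
      funext s
      have hs : s.1 < p - 1 := s.2
      have hi : i.1 < p := i.2
      simp only [Bbar, LinearMap.coe_mk, AddHom.coe_mk, Pi.add_apply, Pi.smul_apply,
        Pi.neg_apply, Pi.zero_apply, dite_apply, Pi.single_apply, smul_eq_mul,
        Fin.mk.injEq, Fin.ext_iff, Fin.val_mk, map_zero]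
      split_ifs <;> first | rfl | (exfalso; omega) | norm_num
    · rw [if_neg hip, map_add, pim_xm, pim_xm, pim_xm]
      funext s
      have hs : s.1 < p - 1 := s.2
      have hi : i.1 < p := i.2
      simp only [Bbar, LinearMap.coe_mk, AddHom.coe_mk, Pi.add_apply, Pi.smul_apply,
        Pi.neg_apply, Pi.zero_apply, dite_apply, Pi.single_apply, smul_eq_mul,
        Fin.mk.injEq, Fin.ext_iff, Fin.val_mk, map_zero]
      split_ifs <;> first | rfl | (exfalso; omega) | norm_num
  · -- g row
    rw [← gv_eq_single, map_add, map_smul, map_smul, pim_gv, pim_gv, pim_gv]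
    simp

end S12
end
noncomputable section
namespace S12

lemma single_eq_inv_smul {n : ℕ} (c : ℂ) (hc : c ≠ 0) (x : ℂ) (i : Fin n) :
    (Pi.single i x : Fin n → ℂ) = c⁻¹ • (Pi.single i (c * x) : Fin n → ℂ) := by
  funext s
  simp only [Pi.smul_apply, Pi.single_apply, smul_eq_mul]
  split_ifs <;> field_simp <;> simp

lemma Abar_apply (p : ℕ) (v : Fin (p - 1) → ℂ) :
    Abar p v = fun s => dvec p s * v s := rfl

lemma diag_single_mem {n : ℕ} (d : Fin n → ℂ) (hd : Function.Injective d)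
    (U : Submodule ℂ (Fin n → ℂ)) (hU : ∀ v ∈ U, (fun s => d s * v s) ∈ U) :
    ∀ v ∈ U, ∀ i, Pi.single i (v i) ∈ U := by
  suffices h : ∀ N (v : Fin n → ℂ), v ∈ U →
      (Finset.univ.filter fun j => v j ≠ 0).card ≤ N → ∀ i, Pi.single i (v i) ∈ U by
    intro v hv i
    exact h _ v hv le_rfl i
  intro N
  induction N with
  | zero =>
    intro v hv hc i
    have hvi : v i = 0 := by
      by_contra h0
      have hmem : i ∈ Finset.univ.filter fun j => v j ≠ 0 := by simp [h0]
      have := Finset.card_pos.mpr ⟨i, hmem⟩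
      omega
    rw [hvi, Pi.single_zero]
    exact U.zero_mem
  | succ N ih =>
    intro v hv hc i
    by_cases h0 : v i = 0
    · rw [h0, Pi.single_zero]; exact U.zero_mem
    by_cases hj : ∃ j, j ≠ i ∧ v j ≠ 0
    · obtain ⟨j, hji, hvj⟩ := hj
      set w : Fin n → ℂ := (fun s => d s * v s) - d j • v with hw
      have hwU : w ∈ U := U.sub_mem (hU v hv) (U.smul_mem (d j) hv)
      have hwapp : ∀ s, w s = (d s - d j) * v s := by
        intro s; simp [hw]; ring
      have hcard : (Finset.univ.filter fun s => w s ≠ 0).card ≤ N := by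
        have hsub : (Finset.univ.filter fun s => w s ≠ 0)
            ⊆ (Finset.univ.filter fun s => v s ≠ 0).erase j := by
          intro s hsmem
          simp only [Finset.mem_filter, Finset.mem_erase, Finset.mem_univ, true_and,
            ne_eq] at *
          constructor
          · rintro rfl
            exact hsmem (by rw [hwapp]; ring)
          · intro hv0
            exact hsmem (by rw [hwapp, hv0, mul_zero])
        have hjmem : j ∈ Finset.univ.filter fun s => v s ≠ 0 := by simp [hvj]
        have hle := Finset.card_le_card hsub
        have her := Finset.card_erase_of_mem hjmem
        have hpos := Finset.card_pos.mpr ⟨j, hjmem⟩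
        omega
      have hwi := ih w hwU hcard i
      rw [hwapp i] at hwi
      have hdij : d i - d j ≠ 0 := sub_ne_zero.mpr (fun h => hji ((hd h).symm))
      rw [single_eq_inv_smul (d i - d j) hdij]
      exact U.smul_mem _ hwi
    · push_neg at hj
      have hv' : v = Pi.single i (v i) := by
        funext s
        by_cases hsi : s = i
        · subst hsi; simp
        · rw [Pi.single_apply, if_neg hsi]
          exact hj s hsi
      rw [← hv']
      exact hv

lemma step_mem (p : ℕ) (hp : 2 ≤ p) (U : Submodule ℂ (Fin (p - 1) → ℂ))
    (hA : ∀ v ∈ U, Abar p v ∈ U) (hB : ∀ v ∈ U, Bbar p v ∈ U)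
    (j : Fin (p - 1)) (hj : Pi.single j (1 : ℂ) ∈ U) :
    (∀ h : j.1 + 1 < p - 1, Pi.single (⟨j.1 + 1, h⟩ : Fin (p - 1)) (1 : ℂ) ∈ U) ∧
    (∀ _ : 1 ≤ j.1, Pi.single (⟨j.1 - 1, by omega⟩ : Fin (p - 1)) (1 : ℂ) ∈ U) := by
  have hA' : ∀ v ∈ U, (fun s => dvec p s * v s) ∈ U := fun v hv => hA v hv
  have hdsm := diag_single_mem (dvec p) (dvec_inj p hp) U hA'
  set v : Fin (p - 1) → ℂ := Bbar p (Pi.single j 1) with hv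
  have hvU : v ∈ U := hB _ hj
  constructor
  · intro h
    have h1 : v ⟨j.1 + 1, h⟩ = 1 := by
      simp only [hv, Bbar, LinearMap.coe_mk, AddHom.coe_mk, Pi.single_apply, Fin.ext_iff,
        Fin.val_mk]
      split_ifs <;> first | (exfalso; omega) | norm_num
    have := hdsm v hvU ⟨j.1 + 1, h⟩
    rwa [h1] at this
  · intro h
    have h1 : v ⟨j.1 - 1, by omega⟩ = 1 := by
      simp only [hv, Bbar, LinearMap.coe_mk, AddHom.coe_mk, Pi.single_apply, Fin.ext_iff,
        Fin.val_mk]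
      have hjlt : j.1 < p - 1 := j.2
      split_ifs <;> first | (exfalso; omega) | norm_num
    have := hdsm v hvU ⟨j.1 - 1, by omega⟩
    rwa [h1] at this

lemma all_singles (p : ℕ) (hp : 2 ≤ p) (U : Submodule ℂ (Fin (p - 1) → ℂ))
    (hA : ∀ v ∈ U, Abar p v ∈ U) (hB : ∀ v ∈ U, Bbar p v ∈ U)
    (i : Fin (p - 1)) (hi : Pi.single i (1 : ℂ) ∈ U) :
    ∀ j : Fin (p - 1), Pi.single j (1 : ℂ) ∈ U := by
  have hi2 := i.2
  have down : ∀ m : ℕ, m ≤ i.1 →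
      Pi.single (⟨i.1 - m, by omega⟩ : Fin (p - 1)) (1 : ℂ) ∈ U := by
    intro m
    induction m with
    | zero =>
      intro _
      have he : (⟨i.1 - 0, by omega⟩ : Fin (p - 1)) = i := Fin.ext (by simp)
      rw [he]; exact hi
    | succ m ihm =>
      intro hm
      have h1 := ihm (by omega)
      have h2 := (step_mem p hp U hA hB ⟨i.1 - m, by omega⟩ h1).2 (by
        show 1 ≤ i.1 - m; omega)
      have he : (⟨(⟨i.1 - m, by omega⟩ : Fin (p - 1)).1 - 1, by omega⟩ : Fin (p - 1))
          = ⟨i.1 - (m + 1), by omega⟩ := Fin.ext (by simp; omega)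
      rwa [he] at h2
  have h0 : Pi.single (⟨0, by omega⟩ : Fin (p - 1)) (1 : ℂ) ∈ U := by
    have := down i.1 le_rfl
    have he : (⟨i.1 - i.1, by omega⟩ : Fin (p - 1)) = ⟨0, by omega⟩ := Fin.ext (by simp)
    rwa [he] at this
  have up : ∀ k (h : k < p - 1), Pi.single (⟨k, h⟩ : Fin (p - 1)) (1 : ℂ) ∈ U := by
    intro k
    induction k with
    | zero => intro h; exact h0
    | succ k ihk =>
      intro h
      have h1 := ihk (by omega)
      exact (step_mem p hp U hA hB ⟨k, by omega⟩ h1).1 h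
  intro j
  exact up j.1 j.2

lemma quotient_simple (p : ℕ) (hp : 2 ≤ p) (U : Submodule ℂ (Fin (p - 1) → ℂ))
    (hA : ∀ v ∈ U, Abar p v ∈ U) (hB : ∀ v ∈ U, Bbar p v ∈ U) :
    U = ⊥ ∨ U = ⊤ := by
  by_cases hbot : U = ⊥
  · exact Or.inl hbot
  right
  obtain ⟨v, hvU, hv0⟩ := (Submodule.ne_bot_iff U).mp hbot
  have hex : ∃ i, v i ≠ 0 := by
    by_contra h
    push_neg at h
    exact hv0 (funext h)
  obtain ⟨i, hvi⟩ := hex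
  have hA' : ∀ v ∈ U, (fun s => dvec p s * v s) ∈ U := fun v hv => hA v hv
  have h1 : Pi.single i (v i) ∈ U :=
    diag_single_mem (dvec p) (dvec_inj p hp) U hA' v hvU i
  have h2 : Pi.single i (1 : ℂ) ∈ U := by
    rw [single_eq_inv_smul (v i) hvi 1, mul_one]
    exact U.smul_mem _ h1
  have hall := all_singles p hp U hA hB i h2
  rw [Submodule.eq_top_iff']
  intro w
  have hw : w = ∑ j, Pi.single j (w j) := (Finset.univ_sum_single w).symm
  rw [hw]
  refine Submodule.sum_mem _ (fun j _ => ?_)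
  have hsm : Pi.single j (w j) = (w j) • (Pi.single j (1 : ℂ) : Fin (p - 1) → ℂ) := by
    funext s
    simp only [Pi.smul_apply, Pi.single_apply, smul_eq_mul]
    split_ifs <;> simp
  rw [hsm]
  exact U.smul_mem _ (hall j)

end S12
end
noncomputable section
namespace S12

lemma pim_gen (p : ℕ) (hp : 2 ≤ p) (s : Fin (p - 1)) :
    pim p (xp p (s.1 + 1) + xm p (p - (s.1 + 1))) = 0 := by
  have hs := s.2
  rw [map_add, pim_xp, pim_xm, dif_pos ⟨by omega, by omega⟩, dif_pos (by omega)]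
  have he : (⟨p - 1 - (p - (s.1 + 1)), by omega⟩ : Fin (p - 1))
      = ⟨s.1 + 1 - 1, by omega⟩ := Fin.ext (by simp; omega)
  rw [he]
  simp

lemma pim_xp_p (p : ℕ) (hp : 2 ≤ p) : pim p (xp p p) = 0 := by
  rw [pim_xp, dif_neg (by omega)]

lemma pim_xm_p (p : ℕ) (hp : 2 ≤ p) : pim p (xm p p) = 0 := by
  rw [pim_xm, dif_neg (by omega)]

/-- The section substracting the `J₁`-component. -/
def sig (p : ℕ) : GTA p →ₗ[ℂ] GTA p where
  toFun v := v - ∑ s : Fin (p - 1), (pim p v s) • xp p (s.1 + 1)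
  map_add' u v := by
    simp only [map_add, Pi.add_apply, add_smul, Finset.sum_add_distrib]
    abel
  map_smul' c v := by
    simp only [map_smul, Pi.smul_apply, smul_eq_mul, RingHom.id_apply, smul_sub,
      Finset.smul_sum, smul_smul]

lemma sig_apply (p : ℕ) (v : GTA p) :
    sig p v = v - ∑ s : Fin (p - 1), (pim p v s) • xp p (s.1 + 1) := rfl

lemma sig_eq_self_of (p : ℕ) (v : GTA p) (h : pim p v = 0) : sig p v = v := by
  rw [sig_apply, h]
  simp

lemma sig_xp_eq_zero (p : ℕ) (hp : 2 ≤ p) (s : Fin (p - 1)) :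
    sig p (xp p (s.1 + 1)) = 0 := by
  have hs := s.2
  rw [sig_apply, pim_xp, dif_pos ⟨by omega, by omega⟩]
  have hsum : ∑ t : Fin (p - 1),
      ((Pi.single (⟨s.1 + 1 - 1, by omega⟩ : Fin (p - 1)) (1 : ℂ) : Fin (p - 1) → ℂ) t) • xp p (t.1 + 1)
      = xp p ((⟨s.1 + 1 - 1, by omega⟩ : Fin (p - 1)).1 + 1) := by
    rw [Finset.sum_eq_single (⟨s.1 + 1 - 1, by omega⟩ : Fin (p - 1))]
    · simp
    · intro t _ ht
      rw [Pi.single_apply, if_neg ht, zero_smul]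
    · intro habs
      exact absurd (Finset.mem_univ _) habs
  rw [hsum]
  have he : (⟨s.1 + 1 - 1, by omega⟩ : Fin (p - 1)).1 + 1 = s.1 + 1 := by simp
  rw [he, sub_self]

lemma sig_mem_J1 (p : ℕ) (hp : 2 ≤ p) : ∀ v ∈ J2 p, sig p v ∈ J1 p := by
  intro v hv
  have hv' : v ∈ Submodule.span ℂ
      (((Set.range fun s : Fin (p - 1) => xp p (s.1 + 1) + xm p (p - (s.1 + 1)))
        ∪ {xp p p, xm p p})
        ∪ (Set.range fun s : Fin (p - 1) => xp p (s.1 + 1))) := by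
    rw [Submodule.span_union]
    exact hv
  refine Submodule.span_induction ?_ ?_ ?_ ?_ hv'
  · rintro x hx
    rcases hx with hx | hx
    · have h0 : pim p x = 0 := by
        rcases hx with ⟨s, rfl⟩ | hx
        · exact pim_gen p hp s
        · rcases hx with rfl | rfl
          · exact pim_xp_p p hp
          · exact pim_xm_p p hp
      rw [sig_eq_self_of p x h0]
      exact Submodule.subset_span hx
    · obtain ⟨s, rfl⟩ := hx
      rw [sig_xp_eq_zero p hp s]
      exact (J1 p).zero_mem
  · rw [map_zero]; exact (J1 p).zero_mem
  · intro x y _ _ hx hy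
    rw [map_add]; exact (J1 p).add_mem hx hy
  · intro c x _ hx
    rw [map_smul]; exact (J1 p).smul_mem c hx

lemma mem_J1_of (p : ℕ) (hp : 2 ≤ p) (v : GTA p) (hv : v ∈ J2 p) (h0 : pim p v = 0) :
    v ∈ J1 p := by
  have := sig_mem_J1 p hp v hv
  rwa [sig_eq_self_of p v h0] at this

end S12
end


/-- the factor `J₂/J₁` is simple under the two operators `A`, `B`: every subspace
`W` with `J₁ ⊆ W ⊆ J₂` invariant under `A` and `B` equals `J₁` or `J₂`. -/
theorem stmt12 (p : ℕ) (hp : 2 ≤ p) :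
    ∀ W : Submodule ℂ (GTA p), J1 p ≤ W → W ≤ J2 p →
      (∀ v ∈ W, Aop p v ∈ W) → (∀ v ∈ W, Bop p v ∈ W) →
      W = J1 p ∨ W = J2 p := by
  intro W hJ1W hWJ2 hA hB
  set U : Submodule ℂ (Fin (p - 1) → ℂ) := W.map (S12.pim p) with hU
  have hUA : ∀ u ∈ U, S12.Abar p u ∈ U := by
    rintro u hu
    obtain ⟨w, hw, rfl⟩ := hu
    exact ⟨Aop p w, hA w hw, LinearMap.congr_fun (S12.interA p hp) w⟩
  have hUB : ∀ u ∈ U, S12.Bbar p u ∈ U := by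
    rintro u hu
    obtain ⟨w, hw, rfl⟩ := hu
    exact ⟨Bop p w, hB w hw, LinearMap.congr_fun (S12.interB p hp) w⟩
  rcases S12.quotient_simple p hp U hUA hUB with h | h
  · left
    refine le_antisymm ?_ hJ1W
    intro w hw
    have h0 : S12.pim p w = 0 := by
      have hmem : S12.pim p w ∈ U := ⟨w, hw, rfl⟩
      rw [h] at hmem
      simpa using hmem
    exact S12.mem_J1_of p hp w (hWJ2 hw) h0
  · right
    refine le_antisymm hWJ2 ?_
    intro v hv
    have hmem : S12.pim p v ∈ U := by rw [h]; trivial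
    obtain ⟨w, hwW, hpw⟩ := hmem
    have hd : v - w ∈ J1 p :=
      S12.mem_J1_of p hp _ ((J2 p).sub_mem hv (hWJ2 hwW)) (by rw [map_sub, hpw, sub_self])
    have := W.add_mem (hJ1W hd) hwW
    simpa using this
end
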